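/- arXiv:1705.06517 — 4 statements merged into one kernel-verified Lean document; each statement's English description precedes it below -/
import Mathlib

section
/- The map from double cosets H\S_{2n}/H to n×n matrices, sending the double coset of u to the matrix M(u) with entries M(u)_{ij} = #({2i-1, 2i} ∩ u({2j-1, 2j})), is a well-defined injection whose image is exactly the set of n×n matrices with non-negative integer entries all of whose row sums and column sums equal 2. -/
/-- The equivalence `Fin n × Fin 2 ≃ Fin (2*n)`, `(a, b) ↦ 2a + b`. -/
def pairFinEquiv (n : ℕ) : Fin n × Fin 2 ≃ Fin (2 * n) where
  toFun p := ⟨2 * p.1.1 + p.2.1, by have h1 := p.1.2; have h2 := p.2.2; omega⟩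
  invFun i := (⟨i.1 / 2, by have := i.2; omega⟩, ⟨i.1 % 2, by omega⟩)
  left_inv := by
    rintro ⟨⟨a, ha⟩, ⟨b, hb⟩⟩
    simp only [Prod.mk.injEq]
    constructor <;> apply Fin.ext <;> simp <;> omega
  right_inv := by
    rintro ⟨i, hi⟩
    apply Fin.ext
    simp
    omega

/-- The doubling map `w ↦ w̃`, sending a permutation of `{0, …, n-1}` to the permutation of
`{0, …, 2n-1}` with `w̃(2i) = 2w(i)` and `w̃(2i+1) = 2w(i)+1` (the zero-based version of
`w̃(2i) = 2w(i)`, `w̃(2i-1) = 2w(i)-1`). -/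
def double {n : ℕ} (w : Equiv.Perm (Fin n)) : Equiv.Perm (Fin (2 * n)) :=
  (pairFinEquiv n).permCongr (Equiv.prodCongr w (Equiv.refl (Fin 2)))

/-- The number of inversions of a permutation, i.e. its Coxeter length. -/
noncomputable def invLength {n : ℕ} (u : Equiv.Perm (Fin n)) : ℕ :=
  Set.ncard { p : Fin n × Fin n | p.1 < p.2 ∧ u p.2 < u p.1 }

/-- Bruhat order on the symmetric group: the reflexive-transitive closure of the relation
`a → a * t` where `t` is a transposition and `ℓ(a * t) > ℓ(a)`. -/
def BruhatLE {n : ℕ} (x w : Equiv.Perm (Fin n)) : Prop :=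
  Relation.ReflTransGen
    (fun a b => (∃ i j : Fin n, b = a * Equiv.swap i j) ∧ invLength a < invLength b) x w

/-- The subgroup `H` of `S_{2n}` of permutations preserving each pair `{2i, 2i+1}`. -/
def pairSubgroup (n : ℕ) : Subgroup (Equiv.Perm (Fin (2 * n))) where
  carrier := { u | ∀ i, (u i).1 / 2 = i.1 / 2 }
  one_mem' := by intro i; rfl
  mul_mem' := by
    intro a b ha hb i
    rw [Equiv.Perm.mul_apply, ha, hb]
  inv_mem' := by
    intro a ha i
    have h := ha (a⁻¹ i)
    rw [← Equiv.Perm.mul_apply, mul_inv_cancel, Equiv.Perm.one_apply] at h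
    omega

/-- The subgroup `K` of `S_{2n}` of parity-preserving permutations. -/
def paritySubgroup (n : ℕ) : Subgroup (Equiv.Perm (Fin (2 * n))) where
  carrier := { u | ∀ i, (u i).1 % 2 = i.1 % 2 }
  one_mem' := by intro i; rfl
  mul_mem' := by
    intro a b ha hb i
    rw [Equiv.Perm.mul_apply, ha, hb]
  inv_mem' := by
    intro a ha i
    have h := ha (a⁻¹ i)
    rw [← Equiv.Perm.mul_apply, mul_inv_cancel, Equiv.Perm.one_apply] at h
    omega

/-- A permutation of `{0,…,2n-1}` is bi-`H`-reduced if it is increasing on each pair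
`{2i, 2i+1}` and so is its inverse. -/
def BiReduced {n : ℕ} (v : Equiv.Perm (Fin (2 * n))) : Prop :=
  ∀ i : Fin n,
    v ⟨2 * i.1, by have := i.2; omega⟩ < v ⟨2 * i.1 + 1, by have := i.2; omega⟩ ∧
    v⁻¹ ⟨2 * i.1, by have := i.2; omega⟩ < v⁻¹ ⟨2 * i.1 + 1, by have := i.2; omega⟩

/-- Membership of `v` in the double coset `H x H` of `H = pairSubgroup n`. -/
def InPairDoubleCoset {n : ℕ} (x v : Equiv.Perm (Fin (2 * n))) : Prop :=
  ∃ h₁ ∈ pairSubgroup n, ∃ h₂ ∈ pairSubgroup n, v = h₁ * x * h₂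

/-- The matrix attached to a double coset `HuH`: the `(i,j)` entry is
`#({2i, 2i+1} ∩ u({2j, 2j+1}))`. -/
noncomputable def cosetMatrix {n : ℕ} (u : Equiv.Perm (Fin (2 * n))) :
    Matrix (Fin n) (Fin n) ℕ :=
  fun i j => Set.ncard { k : Fin (2 * n) | k.1 / 2 = j.1 ∧ (u k).1 / 2 = i.1 }

/-- The simple reflection `s_j = (j, j+1)` of `S_n` (zero-based). -/
def sRefl {n : ℕ} (j : {j : ℕ // j + 1 < n}) : Equiv.Perm (Fin n) :=
  Equiv.swap ⟨j.1, Nat.lt_of_succ_lt j.2⟩ ⟨j.1 + 1, j.2⟩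

/-- A Boolean permutation: a product of distinct simple reflections. -/
def BooleanPerm {n : ℕ} (w : Equiv.Perm (Fin n)) : Prop :=
  ∃ js : List {j : ℕ // j + 1 < n}, (js.map Subtype.val).Nodup ∧ w = (js.map sRefl).prod

/-- `w` avoids the pattern `(321)`. -/
def Avoids321 {n : ℕ} (w : Equiv.Perm (Fin n)) : Prop :=
  ¬ ∃ i j k : Fin n, i < j ∧ j < k ∧ w k < w j ∧ w j < w i

/-- `w` avoids the pattern `(3412)`. -/
def Avoids3412 {n : ℕ} (w : Equiv.Perm (Fin n)) : Prop :=
  ¬ ∃ i j k l : Fin n, i < j ∧ j < k ∧ k < l ∧ w k < w l ∧ w l < w i ∧ w i < w j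

/-- `w` avoids the pattern `(4231)`. -/
def Avoids4231 {n : ℕ} (w : Equiv.Perm (Fin n)) : Prop :=
  ¬ ∃ i j k l : Fin n, i < j ∧ j < k ∧ k < l ∧ w l < w j ∧ w j < w k ∧ w k < w i

namespace Stmt7Aux

section Aux
variable {n : ℕ}

lemma perm_apply_inv_self {α : Type*} (f : Equiv.Perm α) (x : α) : f (f⁻¹ x) = x :=
  Equiv.apply_symm_apply f x

lemma ncard_pair (j : Fin n) (p : Fin (2 * n) → Prop) [DecidablePred p] :
    {k : Fin (2 * n) | k.1 / 2 = j.1 ∧ p k}.ncard =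
      (if p ⟨2 * j.1, by have := j.2; omega⟩ then 1 else 0) +
      (if p ⟨2 * j.1 + 1, by have := j.2; omega⟩ then 1 else 0) := by
  classical
  set a : Fin (2 * n) := ⟨2 * j.1, by have := j.2; omega⟩ with ha
  set b : Fin (2 * n) := ⟨2 * j.1 + 1, by have := j.2; omega⟩ with hb
  have hset : {k : Fin (2 * n) | k.1 / 2 = j.1 ∧ p k}
      = ↑(({a, b} : Finset (Fin (2 * n))).filter p) := by
    ext k
    simp only [Set.mem_setOf_eq, Finset.coe_filter, Finset.mem_insert,
      Finset.mem_singleton]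
    constructor
    · rintro ⟨h1, h2⟩
      refine ⟨?_, h2⟩
      have : k.1 = 2 * j.1 ∨ k.1 = 2 * j.1 + 1 := by omega
      rcases this with h | h
      · left; exact Fin.ext h
      · right; exact Fin.ext h
    · rintro ⟨h1, h2⟩
      refine ⟨?_, h2⟩
      rcases h1 with h | h <;> subst h <;> simp [ha, hb] <;> omega
  rw [hset, Set.ncard_coe_finset]
  have hab : a ≠ b := by simp [ha, hb, Fin.ext_iff]
  by_cases hpa : p a <;> by_cases hpb : p b <;>
    simp [Finset.filter_insert, Finset.filter_singleton, hpa, hpb,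
      Finset.card_insert_of_notMem, hab]

lemma cosetMatrix_eq (u : Equiv.Perm (Fin (2 * n))) (i j : Fin n) :
    cosetMatrix u i j =
      (if (u ⟨2 * j.1, by have := j.2; omega⟩).1 / 2 = i.1 then 1 else 0) +
      (if (u ⟨2 * j.1 + 1, by have := j.2; omega⟩).1 / 2 = i.1 then 1 else 0) := by
  classical
  exact ncard_pair j (fun k => (u k).1 / 2 = i.1)

lemma sum_pairs (f : Fin (2 * n) → ℕ) :
    ∑ k, f k = ∑ j : Fin n,
      (f ⟨2 * j.1, by have := j.2; omega⟩ + f ⟨2 * j.1 + 1, by have := j.2; omega⟩) := by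
  rw [← Equiv.sum_comp (pairFinEquiv n) f, Fintype.sum_prod_type]
  refine Finset.sum_congr rfl (fun j _ => ?_)
  rw [Fin.sum_univ_two]
  congr 1 <;> · congr 1; exact Fin.ext (by simp [pairFinEquiv])

lemma sum_ind_one (m : Fin (2 * n)) :
    ∑ i : Fin n, (if m.1 / 2 = i.1 then 1 else 0) = 1 := by
  have hm : m.1 / 2 < n := by have := m.2; omega
  have : ∀ i : Fin n, (if m.1 / 2 = i.1 then 1 else 0)
      = if i = (⟨m.1 / 2, hm⟩ : Fin n) then 1 else 0 := by
    intro i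
    congr 1
    simp [Fin.ext_iff, eq_comm]
  simp only [this]
  simp

lemma colSum (u : Equiv.Perm (Fin (2 * n))) (j : Fin n) :
    ∑ i, cosetMatrix u i j = 2 := by
  simp only [cosetMatrix_eq u _ j]
  rw [Finset.sum_add_distrib, sum_ind_one, sum_ind_one]

lemma rowSum (u : Equiv.Perm (Fin (2 * n))) (i : Fin n) :
    ∑ j, cosetMatrix u i j = 2 := by
  simp only [cosetMatrix_eq u i]
  have h1 : ∑ j : Fin n,
      ((if (u ⟨2 * j.1, by have := j.2; omega⟩).1 / 2 = i.1 then 1 else 0) +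
       (if (u ⟨2 * j.1 + 1, by have := j.2; omega⟩).1 / 2 = i.1 then 1 else 0))
      = ∑ k : Fin (2 * n), (if (u k).1 / 2 = i.1 then 1 else 0) :=
    (sum_pairs (fun k => if (u k).1 / 2 = i.1 then 1 else 0)).symm
  rw [h1, Equiv.sum_comp u (fun m => if m.1 / 2 = i.1 then (1:ℕ) else 0),
    sum_pairs (fun m => if m.1 / 2 = i.1 then (1:ℕ) else 0)]
  have : ∀ j : Fin n,
      ((if (2 * j.1) / 2 = i.1 then (1:ℕ) else 0) +
       (if (2 * j.1 + 1) / 2 = i.1 then (1:ℕ) else 0))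
      = if j = i then 2 else 0 := by
    intro j
    have e1 : (2 * j.1) / 2 = j.1 := by omega
    have e2 : (2 * j.1 + 1) / 2 = j.1 := by omega
    rw [e1, e2]
    by_cases h : j = i
    · simp [h]
    · have : j.1 ≠ i.1 := fun hc => h (Fin.ext hc)
      simp [h, this]
  simp only [this]
  simp

end Aux

section Coset
variable {n : ℕ}

lemma matrix_eq_of_coset {u v : Equiv.Perm (Fin (2 * n))}
    (h : InPairDoubleCoset u v) : cosetMatrix u = cosetMatrix v := by
  obtain ⟨h₁, hh₁, h₂, hh₂, rfl⟩ := h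
  have hh₁' : ∀ k, (h₁ k).1 / 2 = k.1 / 2 := hh₁
  have hh₂' : ∀ k, (h₂ k).1 / 2 = k.1 / 2 := hh₂
  funext i j
  show Set.ncard _ = Set.ncard _
  have hset : { k : Fin (2 * n) | k.1 / 2 = j.1 ∧ ((h₁ * u * h₂) k).1 / 2 = i.1 }
      = ⇑h₂⁻¹ '' { k : Fin (2 * n) | k.1 / 2 = j.1 ∧ (u k).1 / 2 = i.1 } := by
    ext k
    simp only [Set.mem_setOf_eq, Set.mem_image]
    constructor
    · rintro ⟨h1, h2⟩
      refine ⟨h₂ k, ⟨?_, ?_⟩, by simp⟩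
      · rw [hh₂']; exact h1
      · have : ((h₁ * u * h₂) k).1 / 2 = (u (h₂ k)).1 / 2 := by
          simp only [Equiv.Perm.mul_apply]; rw [hh₁']
        omega
    · rintro ⟨m, ⟨h1, h2⟩, rfl⟩
      constructor
      · have := hh₂' (h₂⁻¹ m)
        simp only [perm_apply_inv_self] at this
        omega
      · simp only [Equiv.Perm.mul_apply, perm_apply_inv_self]
        rw [hh₁']; exact h2
  rw [hset, Set.ncard_image_of_injective _ (Equiv.injective _)]

lemma dich {n a0 a1 c0 c1 : ℕ} (ha0 : a0 < n) (ha1 : a1 < n) (hc0 : c0 < n)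
    (hc1 : c1 < n)
    (heq : ∀ m, m < n →
      ((if a0 = m then 1 else 0) + (if a1 = m then 1 else 0) : ℕ)
        = (if c0 = m then 1 else 0) + (if c1 = m then 1 else 0)) :
    (a0 = c0 ∧ a1 = c1) ∨ (a0 = c1 ∧ a1 = c0) := by
  by_cases h00 : a0 = c0
  · left
    refine ⟨h00, ?_⟩
    have := heq a1 ha1
    split_ifs at this <;> omega
  · right
    have e1 : a0 = c1 := by
      have := heq a0 ha0
      split_ifs at this <;> omega
    have e2 : a1 = c0 := by
      have := heq c0 hc0
      split_ifs at this <;> omega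
    exact ⟨e1, e2⟩

def flipFin {n : ℕ} (k : Fin (2 * n)) : Fin (2 * n) :=
  ⟨2 * (k.1 / 2) + (1 - k.1 % 2), by have := k.2; omega⟩

def Qprop {n : ℕ} (u v : Equiv.Perm (Fin (2 * n))) (k : Fin (2 * n)) : Prop :=
  (u ⟨2 * (k.1 / 2), by have := k.2; omega⟩).1 / 2
    = (v ⟨2 * (k.1 / 2), by have := k.2; omega⟩).1 / 2

instance {n : ℕ} (u v : Equiv.Perm (Fin (2 * n))) : DecidablePred (Qprop u v) :=
  fun _ => Nat.decEq _ _

def gfun {n : ℕ} (u v : Equiv.Perm (Fin (2 * n))) (k : Fin (2 * n)) : Fin (2 * n) :=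
  if Qprop u v k then k else flipFin k

lemma flipFin_div (k : Fin (2 * n)) : (flipFin k).1 / 2 = k.1 / 2 := by
  show (2 * (k.1 / 2) + (1 - k.1 % 2)) / 2 = k.1 / 2
  omega

lemma gfun_div (u v : Equiv.Perm (Fin (2 * n))) (k : Fin (2 * n)) :
    (gfun u v k).1 / 2 = k.1 / 2 := by
  unfold gfun
  split_ifs
  · rfl
  · exact flipFin_div k

lemma Qprop_congr (u v : Equiv.Perm (Fin (2 * n))) {k m : Fin (2 * n)}
    (h : k.1 / 2 = m.1 / 2) : Qprop u v k ↔ Qprop u v m := by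
  unfold Qprop
  have he : (⟨2 * (k.1 / 2), by have := k.2; omega⟩ : Fin (2 * n))
      = ⟨2 * (m.1 / 2), by have := m.2; omega⟩ := by
    apply Fin.ext
    show 2 * (k.1 / 2) = 2 * (m.1 / 2)
    omega
  rw [he]

lemma gfun_invol (u v : Equiv.Perm (Fin (2 * n))) : Function.Involutive (gfun u v) := by
  intro k
  by_cases hq : Qprop u v k
  · unfold gfun; rw [if_pos hq, if_pos hq]
  · have hq2 : ¬ Qprop u v (flipFin k) := by
      rw [Qprop_congr u v (flipFin_div k)]; exact hq
    unfold gfun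
    rw [if_neg hq, if_neg hq2]
    apply Fin.ext
    show 2 * ((2 * (k.1/2) + (1 - k.1 % 2)) / 2) + (1 - (2 * (k.1/2) + (1 - k.1 % 2)) % 2) = k.1
    omega

lemma coset_of_matrix_eq {u v : Equiv.Perm (Fin (2 * n))}
    (h : cosetMatrix u = cosetMatrix v) : InPairDoubleCoset u v := by
  classical
  have key : ∀ j : Fin n,
      ((u ⟨2 * j.1, by have := j.2; omega⟩).1 / 2 = (v ⟨2 * j.1, by have := j.2; omega⟩).1 / 2 ∧
       (u ⟨2 * j.1 + 1, by have := j.2; omega⟩).1 / 2 = (v ⟨2 * j.1 + 1, by have := j.2; omega⟩).1 / 2) ∨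
      ((u ⟨2 * j.1, by have := j.2; omega⟩).1 / 2 = (v ⟨2 * j.1 + 1, by have := j.2; omega⟩).1 / 2 ∧
       (u ⟨2 * j.1 + 1, by have := j.2; omega⟩).1 / 2 = (v ⟨2 * j.1, by have := j.2; omega⟩).1 / 2) := by
    intro j
    have ha0 : (u ⟨2 * j.1, by have := j.2; omega⟩).1 / 2 < n := by
      have := (u ⟨2 * j.1, by have := j.2; omega⟩).2; omega
    have ha1 : (u ⟨2 * j.1 + 1, by have := j.2; omega⟩).1 / 2 < n := by
      have := (u ⟨2 * j.1 + 1, by have := j.2; omega⟩).2; omega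
    have hc0 : (v ⟨2 * j.1, by have := j.2; omega⟩).1 / 2 < n := by
      have := (v ⟨2 * j.1, by have := j.2; omega⟩).2; omega
    have hc1 : (v ⟨2 * j.1 + 1, by have := j.2; omega⟩).1 / 2 < n := by
      have := (v ⟨2 * j.1 + 1, by have := j.2; omega⟩).2; omega
    refine dich ha0 ha1 hc0 hc1 ?_
    intro m hm
    have := congrFun (congrFun h (⟨m, hm⟩ : Fin n)) j
    rw [cosetMatrix_eq, cosetMatrix_eq] at this
    exact this
  set h₂ : Equiv.Perm (Fin (2 * n)) := Function.Involutive.toPerm _ (gfun_invol u v)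
    with hh2def
  have hh2app : ∀ k, h₂ k = gfun u v k := fun k => rfl
  have hh2mem : h₂ ∈ pairSubgroup n := fun k => by rw [hh2app]; exact gfun_div u v k
  have keyk : ∀ k, (u (h₂ k)).1 / 2 = (v k).1 / 2 := by
    intro k
    have hk2 := k.2
    have hjn : k.1 / 2 < n := by omega
    have hkey := key ⟨k.1 / 2, hjn⟩
    simp only at hkey
    rw [hh2app]
    rcases Nat.even_or_odd k.1 with he | ho
    · -- k even : k = ⟨2*(k.1/2)⟩
      have hem : k.1 % 2 = 0 := by rcases he with ⟨c, hc⟩; omega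
      have hke : (⟨2 * (k.1 / 2), by omega⟩ : Fin (2 * n)) = k := by
        apply Fin.ext; show 2 * (k.1 / 2) = k.1; omega
      rw [hke] at hkey
      by_cases hq : Qprop u v k
      · have hq' : (u k).1 / 2 = (v k).1 / 2 := by
          have : (u ⟨2 * (k.1 / 2), by omega⟩).1 / 2
              = (v ⟨2 * (k.1 / 2), by omega⟩).1 / 2 := hq
          rwa [hke] at this
        unfold gfun
        rw [if_pos hq]
        exact hq'
      · have hq' : ¬ ((u k).1 / 2 = (v k).1 / 2) := by
          intro hc
          apply hq
          show (u ⟨2 * (k.1 / 2), by omega⟩).1 / 2 = (v ⟨2 * (k.1 / 2), by omega⟩).1 / 2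
          rw [hke]; exact hc
        have hkey' := hkey.resolve_left (fun hc => hq' hc.1)
        unfold gfun
        rw [if_neg hq]
        have hff : flipFin k = (⟨2 * (k.1 / 2) + 1, by omega⟩ : Fin (2 * n)) := by
          apply Fin.ext
          show 2 * (k.1 / 2) + (1 - k.1 % 2) = 2 * (k.1 / 2) + 1
          omega
        rw [hff]
        exact hkey'.2
    · -- k odd : k = ⟨2*(k.1/2)+1⟩
      have hom : k.1 % 2 = 1 := by rcases ho with ⟨c, hc⟩; omega
      have hko : (⟨2 * (k.1 / 2) + 1, by omega⟩ : Fin (2 * n)) = k := by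
        apply Fin.ext; show 2 * (k.1 / 2) + 1 = k.1; omega
      rw [hko] at hkey
      by_cases hq : Qprop u v k
      · have hq' : (u ⟨2 * (k.1 / 2), by omega⟩).1 / 2
            = (v ⟨2 * (k.1 / 2), by omega⟩).1 / 2 := hq
        have : (u k).1 / 2 = (v k).1 / 2 := by
          rcases hkey with ⟨_, h2⟩ | ⟨h1, h2⟩
          · exact h2
          · omega
        unfold gfun
        rw [if_pos hq]
        exact this
      · have hq' : ¬ ((u ⟨2 * (k.1 / 2), by omega⟩).1 / 2
            = (v ⟨2 * (k.1 / 2), by omega⟩).1 / 2) := hq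
        have hkey' := hkey.resolve_left (fun hc => hq' hc.1)
        unfold gfun
        rw [if_neg hq]
        have hff : flipFin k = (⟨2 * (k.1 / 2), by omega⟩ : Fin (2 * n)) := by
          apply Fin.ext
          show 2 * (k.1 / 2) + (1 - k.1 % 2) = 2 * (k.1 / 2)
          omega
        rw [hff]
        exact hkey'.1
  refine ⟨v * h₂⁻¹ * u⁻¹, ?_, h₂, hh2mem, by group⟩
  intro x
  simp only [Equiv.Perm.mul_apply]
  have h1 := keyk (h₂⁻¹ (u⁻¹ x))
  rw [perm_apply_inv_self, perm_apply_inv_self] at h1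
  omega

end Coset

section Surj
variable {n : ℕ}

lemma exists_perm (A : Matrix (Fin n) (Fin n) ℕ)
    (hrow : ∀ i, ∑ j, A i j = 2) (hcol : ∀ j, ∑ i, A i j = 2) :
    ∃ u : Equiv.Perm (Fin (2 * n)), cosetMatrix u = A := by
  classical
  have hne : ∀ j : Fin n, (Finset.univ.filter (fun i => A i j ≠ 0)).Nonempty := by
    intro j
    rw [Finset.filter_nonempty_iff]
    by_contra hc
    push_neg at hc
    have : ∑ i, A i j = 0 := Finset.sum_eq_zero (fun i hi => hc i hi)
    rw [hcol j] at this
    omega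
  set t : Fin n × Fin 2 → Fin n := fun p =>
    if p.2.1 = 0 then (Finset.univ.filter (fun i => A i p.1 ≠ 0)).min' (hne p.1)
    else (Finset.univ.filter (fun i => A i p.1 ≠ 0)).max' (hne p.1) with ht
  -- column counting lemma
  have hcolkey : ∀ i j : Fin n,
      ((if t (j, 0) = i then 1 else 0) + (if t (j, 1) = i then 1 else 0) : ℕ) = A i j := by
    intro i j
    set s := Finset.univ.filter (fun i => A i j ≠ 0) with hs
    set m0 := s.min' (hne j) with hm0
    set m1 := s.max' (hne j) with hm1
    have ht0 : t (j, 0) = m0 := by simp [ht, hm0, hs]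
    have ht1 : t (j, 1) = m1 := by simp [ht, hm1, hs]
    rw [ht0, ht1]
    have hm0mem : A m0 j ≠ 0 :=
      (Finset.mem_filter.mp (Finset.min'_mem s (hne j))).2
    have hm1mem : A m1 j ≠ 0 :=
      (Finset.mem_filter.mp (Finset.max'_mem s (hne j))).2
    have hbound : ∀ i' : Fin n, A i' j ≠ 0 → m0 ≤ i' ∧ i' ≤ m1 := by
      intro i' hi'
      have hmem : i' ∈ s := by rw [hs, Finset.mem_filter]; exact ⟨Finset.mem_univ _, hi'⟩
      exact ⟨Finset.min'_le s i' hmem, Finset.le_max' s i' hmem⟩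
    by_cases hmm : m0 = m1
    · -- single support element, A m0 j = 2
      have hsupp : ∀ i' : Fin n, i' ≠ m0 → A i' j = 0 := by
        intro i' hi'
        by_contra hc
        have := hbound i' hc
        rw [← hmm] at this
        exact hi' (le_antisymm this.2 this.1)
      have hA : A m0 j = 2 := by
        have := hcol j
        rwa [Finset.sum_eq_single m0 (fun b _ hb => hsupp b hb) (fun hb => absurd (Finset.mem_univ m0) hb)] at this
      by_cases hi : i = m0
      · rw [if_pos hi.symm, if_pos (show m1 = i by rw [← hmm]; exact hi.symm)]
        rw [hi, hA]
      · have h1 : ¬ (m0 = i) := fun hc => hi hc.symm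
        have h2 : ¬ (m1 = i) := fun hc => hi (by rw [← hmm] at hc; exact hc.symm)
        rw [if_neg h1, if_neg h2, hsupp i hi]
    · -- two support elements
      have hlt : m0 < m1 := lt_of_le_of_ne (Finset.min'_le s m1 (Finset.max'_mem s (hne j))) hmm
      have hsub : ({m0, m1} : Finset (Fin n)) ⊆ Finset.univ := Finset.subset_univ _
      have hsplit : ∑ i' ∈ Finset.univ \ {m0, m1}, A i' j + (A m0 j + A m1 j) = 2 := by
        have hpair : ∑ i' ∈ ({m0, m1} : Finset (Fin n)), A i' j = A m0 j + A m1 j :=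
          Finset.sum_pair hmm
        rw [← hpair, Finset.sum_sdiff hsub]
        exact hcol j
      have hge1 : 1 ≤ A m0 j := Nat.one_le_iff_ne_zero.mpr hm0mem
      have hge2 : 1 ≤ A m1 j := Nat.one_le_iff_ne_zero.mpr hm1mem
      have hrest : ∑ i' ∈ Finset.univ \ {m0, m1}, A i' j = 0 := by omega
      have hzero : ∀ i' : Fin n, i' ≠ m0 → i' ≠ m1 → A i' j = 0 := by
        intro i' h1 h2
        have hmem : i' ∈ Finset.univ \ {m0, m1} := by
          simp [h1, h2]
        exact (Finset.sum_eq_zero_iff.mp hrest) i' hmem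
      have hval : A m0 j = 1 ∧ A m1 j = 1 := by omega
      by_cases h1 : i = m0
      · have h2 : ¬ (m1 = i) := fun hc => hmm (h1 ▸ hc.symm ▸ rfl)
        rw [if_pos h1.symm, if_neg h2, h1, hval.1]
      · by_cases h2 : i = m1
        · have h1' : ¬ (m0 = i) := fun hc => h1 hc.symm
          rw [if_neg h1', if_pos h2.symm, h2, hval.2]
        · rw [if_neg (fun hc => h1 hc.symm), if_neg (fun hc => h2 hc.symm),
            hzero i h1 h2]
  -- fiber cardinality
  have hcard : ∀ i : Fin n, Fintype.card {x : Fin n × Fin 2 // t x = i} = 2 := by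
    intro i
    rw [Fintype.card_subtype]
    rw [Finset.card_filter]
    rw [Fintype.sum_prod_type]
    have : ∀ j : Fin n, ∑ b : Fin 2, (if t (j, b) = i then 1 else 0)
        = ((if t (j, 0) = i then 1 else 0) + (if t (j, 1) = i then 1 else 0) : ℕ) := by
      intro j
      rw [Fin.sum_univ_two]
    simp only [this, hcolkey]
    exact hrow i
  set e : (Fin n × Fin 2) ≃ (Fin n × Fin 2) :=
    ((Equiv.sigmaFiberEquiv t).symm.trans
      (Equiv.sigmaCongrRight (fun i =>
        (Fintype.equivFinOfCardEq (hcard i))))).trans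
      (Equiv.sigmaEquivProd (Fin n) (Fin 2)) with he
  have he1 : ∀ x, (e x).1 = t x := by
    intro x
    rfl
  set u : Equiv.Perm (Fin (2 * n)) := (pairFinEquiv n).permCongr e with hu
  have hu1 : ∀ p : Fin n × Fin 2, u (pairFinEquiv n p) = pairFinEquiv n (e p) := by
    intro p
    simp [hu, Equiv.permCongr_apply]
  refine ⟨u, ?_⟩
  funext i j
  rw [cosetMatrix_eq]
  have hv0 : (⟨2 * j.1, by have := j.2; omega⟩ : Fin (2 * n))
      = pairFinEquiv n (j, 0) := by
    apply Fin.ext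
    show 2 * j.1 = 2 * j.1 + (0 : Fin 2).1
    simp
  have hv1 : (⟨2 * j.1 + 1, by have := j.2; omega⟩ : Fin (2 * n))
      = pairFinEquiv n (j, 1) := by
    apply Fin.ext
    show 2 * j.1 + 1 = 2 * j.1 + (1 : Fin 2).1
    simp
  rw [hv0, hv1, hu1, hu1]
  have hdiv : ∀ p : Fin n × Fin 2, (pairFinEquiv n p).1 / 2 = p.1.1 := by
    intro p
    show (2 * p.1.1 + p.2.1) / 2 = p.1.1
    have := p.2.2
    omega
  rw [hdiv, hdiv, he1, he1]
  have hfin : ∀ b : Fin 2, ((if (t (j, b)).1 = i.1 then 1 else 0) : ℕ)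
      = if t (j, b) = i then 1 else 0 := by
    intro b
    congr 1
    simp [Fin.ext_iff]
  rw [hfin, hfin, hcolkey]

end Surj

end Stmt7Aux

/-- The map `HuH ↦ M(u)` is a well-defined injection from `H\S_{2n}/H` whose image is the
set of `n × n` matrices with non-negative integer entries and all row and column sums `2`. -/


theorem stmt7 (n : ℕ) :
    (∀ u v : Equiv.Perm (Fin (2 * n)),
        InPairDoubleCoset u v ↔ cosetMatrix u = cosetMatrix v) ∧
    (∀ A : Matrix (Fin n) (Fin n) ℕ,
        (∃ u : Equiv.Perm (Fin (2 * n)), cosetMatrix u = A) ↔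
          (∀ i, ∑ j, A i j = 2) ∧ (∀ j, ∑ i, A i j = 2)) := by
  constructor
  · intro u v
    exact ⟨Stmt7Aux.matrix_eq_of_coset, Stmt7Aux.coset_of_matrix_eq⟩
  · intro A
    constructor
    · rintro ⟨u, rfl⟩
      exact ⟨Stmt7Aux.rowSum u, Stmt7Aux.colSum u⟩
    · rintro ⟨hr, hc⟩
      exact Stmt7Aux.exists_perm A hr hc
end

section
/- For any x ∈ S_{2n}, the sign character sgn is constant on K ∩ HxH, where H is the subgroup preserving each pair {2i-1,2i} and K is the subgroup preserving parity. -/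
lemma sign_fin2 : ∀ f : Equiv.Perm (Fin 2),
    Equiv.Perm.sign f = if f 0 = 0 then 1 else -1 := by decide

noncomputable def sgnPair {n : ℕ} (h : Equiv.Perm (Fin (2 * n))) (j : Fin n) : ℤˣ :=
  if h ⟨2 * j.1, by have := j.2; omega⟩ = ⟨2 * j.1, by have := j.2; omega⟩ then 1 else -1

lemma pairSubgroup.sign_eq {n : ℕ} {h : Equiv.Perm (Fin (2 * n))} (hh : h ∈ pairSubgroup n) :
    Equiv.Perm.sign h = ∏ j : Fin n, sgnPair h j := by
  have hinv : h⁻¹ ∈ pairSubgroup n := (pairSubgroup n).inv_mem hh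
  have hdiv : ∀ i : Fin (2*n), (h i).1 / 2 = i.1 / 2 := hh
  have hdiv' : ∀ i : Fin (2*n), (h⁻¹ i).1 / 2 = i.1 / 2 := hinv
  set σ : Fin n → Equiv.Perm (Fin 2) := fun j =>
    { toFun := fun b => ⟨(h ⟨2*j.1+b.1, by have := j.2; have := b.2; omega⟩).1 % 2, by omega⟩
      invFun := fun b => ⟨(h⁻¹ ⟨2*j.1+b.1, by have := j.2; have := b.2; omega⟩).1 % 2, by omega⟩
      left_inv := by
        intro b
        apply Fin.ext
        simp only [Fin.val_mk]
        have h1 := hdiv ⟨2*j.1+b.1, by have := j.2; have := b.2; omega⟩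
        have hb := b.2
        have e1 : (⟨2*j.1 + (h ⟨2*j.1+b.1, by have := j.2; have := b.2; omega⟩).1 % 2,
            by have := j.2; omega⟩ : Fin (2*n)) = h ⟨2*j.1+b.1, by have := j.2; have := b.2; omega⟩ := by
          apply Fin.ext; simp only [Fin.val_mk]; simp only [Fin.val_mk] at h1; omega
        rw [e1, ← Equiv.Perm.mul_apply, inv_mul_cancel, Equiv.Perm.one_apply]
        simp only [Fin.val_mk]
        omega
      right_inv := by
        intro b
        apply Fin.ext
        simp only [Fin.val_mk]
        have h1 := hdiv' ⟨2*j.1+b.1, by have := j.2; have := b.2; omega⟩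
        have hb := b.2
        have e1 : (⟨2*j.1 + (h⁻¹ ⟨2*j.1+b.1, by have := j.2; have := b.2; omega⟩).1 % 2,
            by have := j.2; omega⟩ : Fin (2*n)) = h⁻¹ ⟨2*j.1+b.1, by have := j.2; have := b.2; omega⟩ := by
          apply Fin.ext; simp only [Fin.val_mk]; simp only [Fin.val_mk] at h1; omega
        rw [e1, ← Equiv.Perm.mul_apply, mul_inv_cancel, Equiv.Perm.one_apply]
        simp only [Fin.val_mk]
        omega }
  have hconj : h = (pairFinEquiv n).permCongr (Equiv.prodCongrRight σ) := by
    apply Equiv.ext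
    intro i
    rw [Equiv.permCongr_apply]
    apply Fin.ext
    symm
    have hi := i.2
    have e1 : ((pairFinEquiv n).symm i) = (⟨i.1/2, by omega⟩, ⟨i.1 % 2, by omega⟩) := rfl
    rw [e1]
    show 2 * (i.1/2) + (h ⟨2*(i.1/2) + i.1 % 2, by omega⟩).1 % 2 = (h i).1
    have e2 : (⟨2*(i.1/2) + i.1 % 2, by omega⟩ : Fin (2*n)) = i := by
      apply Fin.ext; simp only [Fin.val_mk]; omega
    rw [e2]
    have := hdiv i
    omega
  conv_lhs => rw [hconj]
  rw [Equiv.Perm.sign_permCongr, Equiv.Perm.sign_prodCongrRight]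
  apply Finset.prod_congr rfl
  intro j _
  have hj := j.2
  rw [sign_fin2 (σ j)]
  have hv0 : σ j 0 = ⟨(h ⟨2*j.1, by omega⟩).1 % 2, by omega⟩ := rfl
  have h0 := hdiv ⟨2*j.1, by omega⟩
  simp only [Fin.val_mk] at h0
  rw [hv0]
  by_cases hc : h ⟨2 * j.1, by omega⟩ = ⟨2 * j.1, by omega⟩
  · rw [sgnPair, if_pos hc, if_pos]
    simp only [hc]
    apply Fin.ext
    simp only [Fin.val_mk]
    omega
  · rw [sgnPair, if_neg hc, if_neg]
    intro he
    apply hc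
    rw [Fin.ext_iff] at he ⊢
    simp only [Fin.val_mk] at he ⊢
    have : (0 : Fin 2).1 = 0 := rfl
    omega

def evenHalf {n : ℕ} (u : Equiv.Perm (Fin (2 * n))) (j : Fin n) : Fin n :=
  ⟨(u ⟨2 * j.1, by have := j.2; omega⟩).1 / 2,
    by have := (u ⟨2 * j.1, by have := j.2; omega⟩).2; omega⟩


lemma key_sign {n : ℕ} {u h₁ h₂ : Equiv.Perm (Fin (2 * n))} (hu : u ∈ paritySubgroup n)
    (hv : h₁ * u * h₂ ∈ paritySubgroup n) (hm1 : h₁ ∈ pairSubgroup n)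
    (hm2 : h₂ ∈ pairSubgroup n) :
    Equiv.Perm.sign h₁ * Equiv.Perm.sign h₂ = 1 := by
  have hu' : ∀ i, (u i).1 % 2 = i.1 % 2 := hu
  have hv' : ∀ i, (h₁ (u (h₂ i))).1 % 2 = i.1 % 2 := hv
  have hp1 : ∀ i, (h₁ i).1 / 2 = i.1 / 2 := hm1
  have hp2 : ∀ i, (h₂ i).1 / 2 = i.1 / 2 := hm2
  set g : Fin n → Fin n := evenHalf u with hgdef
  have hgval : ∀ j : Fin n, (g j).1 = (u ⟨2 * j.1, by have := j.2; omega⟩).1 / 2 :=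
    fun j => rfl
  have hginj : Function.Injective g := by
    intro j j' he
    have hj := j.2
    have hj' := j'.2
    have h1 := hu' ⟨2 * j.1, by omega⟩
    have h2 := hu' ⟨2 * j'.1, by omega⟩
    have he' : (g j).1 = (g j').1 := by rw [he]
    rw [hgval, hgval] at he'
    simp only [Fin.val_mk] at h1 h2
    have huj : u ⟨2 * j.1, by omega⟩ = u ⟨2 * j'.1, by omega⟩ := by
      apply Fin.ext; omega
    have hjj := u.injective huj
    rw [Fin.ext_iff] at hjj
    simp only [Fin.val_mk] at hjj
    apply Fin.ext; omega
  have claim : ∀ j : Fin n, sgnPair h₂ j = sgnPair h₁ (g j) := by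
    intro j
    have hj := j.2
    have hua := hu' ⟨2 * j.1, by omega⟩
    simp only [Fin.val_mk] at hua
    have hgja : (⟨2 * (g j).1, by have := (g j).2; omega⟩ : Fin (2 * n))
        = u ⟨2 * j.1, by omega⟩ := by
      apply Fin.ext
      simp only [Fin.val_mk, hgval]
      omega
    by_cases hc : h₂ ⟨2 * j.1, by omega⟩ = ⟨2 * j.1, by omega⟩
    · have hmul := hv' ⟨2 * j.1, by omega⟩
      simp only [hc, Fin.val_mk] at hmul
      have hd1 := hp1 (u ⟨2 * j.1, by omega⟩)
      have hfix : h₁ (u ⟨2 * j.1, by omega⟩) = u ⟨2 * j.1, by omega⟩ := by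
        apply Fin.ext; omega
      rw [sgnPair, sgnPair, if_pos hc, if_pos]
      rw [hgja, hfix]
    · have hd := hp2 ⟨2 * j.1, by omega⟩
      have hd' := hp2 ⟨2 * j.1 + 1, by omega⟩
      simp only [Fin.val_mk] at hd hd'
      have hcv : (h₂ ⟨2 * j.1, by omega⟩).1 ≠ 2 * j.1 := by
        intro e; exact hc (Fin.ext (by simp only [Fin.val_mk]; omega))
      have hca : (h₂ ⟨2 * j.1, by omega⟩).1 = 2 * j.1 + 1 := by omega
      have hne : h₂ ⟨2 * j.1 + 1, by omega⟩ ≠ h₂ ⟨2 * j.1, by omega⟩ := by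
        intro e
        have := h₂.injective e
        rw [Fin.ext_iff] at this
        simp only [Fin.val_mk] at this
        omega
      have hnev : (h₂ ⟨2 * j.1 + 1, by omega⟩).1 ≠ (h₂ ⟨2 * j.1, by omega⟩).1 :=
        fun e => hne (Fin.ext e)
      have hc2 : h₂ ⟨2 * j.1 + 1, by omega⟩ = ⟨2 * j.1, by omega⟩ := by
        apply Fin.ext
        simp only [Fin.val_mk]
        omega
      have hmul := hv' ⟨2 * j.1 + 1, by omega⟩
      simp only [hc2, Fin.val_mk] at hmul
      have hnfix : h₁ (u ⟨2 * j.1, by omega⟩) ≠ u ⟨2 * j.1, by omega⟩ := by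
        intro e
        rw [Fin.ext_iff] at e
        omega
      rw [sgnPair, sgnPair, if_neg hc, if_neg]
      rw [hgja]
      exact hnfix
  rw [pairSubgroup.sign_eq hm1, pairSubgroup.sign_eq hm2]
  have hprod : ∏ j : Fin n, sgnPair h₂ j = ∏ j : Fin n, sgnPair h₁ j := by
    rw [Finset.prod_congr rfl (fun j _ => claim j)]
    exact Fintype.prod_bijective g (Finite.injective_iff_bijective.mp hginj) _ _ (fun j => rfl)
  rw [hprod]
  exact Int.units_mul_self _


/-- The sign character is constant on `K ∩ HxH`. -/
theorem stmt12 (n : ℕ) (x u v : Equiv.Perm (Fin (2 * n)))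
    (hu : u ∈ paritySubgroup n) (hv : v ∈ paritySubgroup n)
    (hu' : InPairDoubleCoset x u) (hv' : InPairDoubleCoset x v) :
    Equiv.Perm.sign u = Equiv.Perm.sign v := by
  obtain ⟨a, ha, b, hb, hab⟩ := hu'
  obtain ⟨c, hc, d, hd, hcd⟩ := hv'
  have hx : v = (c * a⁻¹) * u * (b⁻¹ * d) := by
    rw [hab, hcd]; group
  have h1 : c * a⁻¹ ∈ pairSubgroup n := mul_mem hc (inv_mem ha)
  have h2 : b⁻¹ * d ∈ pairSubgroup n := mul_mem (inv_mem hb) hd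
  have hk := key_sign hu (hx ▸ hv) h1 h2
  rw [hx, map_mul, map_mul]
  rw [mul_comm (Equiv.Perm.sign (c * a⁻¹)) (Equiv.Perm.sign u), mul_assoc, hk, mul_one]
end

section
/- A permutation w ∈ S_n is a product of distinct simple reflections (i.e., a Coxeter element of a parabolic subgroup of S_n, also called a Boolean permutation) if and only if w avoids both patterns (321) and (3412). -/
namespace Scratch
variable {n : ℕ}

lemma sRefl_val (j : {j : ℕ // j + 1 < n}) (i : Fin n) :
    ((sRefl j) i).1 = if i.1 = j.1 then j.1 + 1 else if i.1 = j.1 + 1 then j.1 else i.1 := by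
  simp only [sRefl, Equiv.swap_apply_def, Fin.ext_iff]
  split_ifs <;> simp_all

lemma sRefl_mul_self (j : {j : ℕ // j + 1 < n}) : sRefl j * sRefl j = 1 :=
  Equiv.swap_mul_self _ _

lemma sRefl_inv (j : {j : ℕ // j + 1 < n}) : (sRefl j)⁻¹ = sRefl j :=
  Equiv.swap_inv _ _

lemma sRefl_commute {j1 j2 : {j : ℕ // j + 1 < n}} (h : j1.1 + 2 ≤ j2.1 ∨ j2.1 + 2 ≤ j1.1) :
    Commute (sRefl j1) (sRefl j2) := by
  apply Equiv.ext
  intro i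
  apply Fin.ext
  simp only [Equiv.Perm.mul_apply, sRefl_val]
  split_ifs <;> omega

lemma avoids321_one : Avoids321 (1 : Equiv.Perm (Fin n)) := by
  rintro ⟨i, j, k, hij, hjk, h1, h2⟩
  simp only [Equiv.Perm.one_apply] at h1 h2
  rw [Fin.lt_def] at hij hjk h1 h2
  omega


lemma avoids3412_one : Avoids3412 (1 : Equiv.Perm (Fin n)) := by
  rintro ⟨i, j, k, l, hij, hjk, hkl, h1, h2, h3⟩
  simp only [Equiv.Perm.one_apply] at h1 h2 h3
  rw [Fin.lt_def] at *
  omega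

lemma avoids321_inv {w : Equiv.Perm (Fin n)} (h : Avoids321 w) : Avoids321 w⁻¹ := by
  rintro ⟨i, j, k, hij, hjk, h1, h2⟩
  exact h ⟨w⁻¹ k, w⁻¹ j, w⁻¹ i, h1, h2, by
    simp only [← Equiv.Perm.mul_apply, mul_inv_cancel, Equiv.Perm.one_apply]; exact ⟨hij, hjk⟩⟩

lemma avoids3412_inv {w : Equiv.Perm (Fin n)} (h : Avoids3412 w) : Avoids3412 w⁻¹ := by
  rintro ⟨i, j, k, l, hij, hjk, hkl, h1, h2, h3⟩
  exact h ⟨w⁻¹ k, w⁻¹ l, w⁻¹ i, w⁻¹ j, h1, h2, h3, by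
    simp only [← Equiv.Perm.mul_apply, mul_inv_cancel, Equiv.Perm.one_apply]; exact ⟨hij, hjk, hkl⟩⟩

lemma fix_ge {c : ℕ} {w : Equiv.Perm (Fin n)} (hfix : ∀ i : Fin n, i.1 < c → w i = i) :
    ∀ k : Fin n, c ≤ k.1 → c ≤ (w k).1 := by
  intro k hk
  by_contra h
  push_neg at h
  have h2 : w k = k := w.injective (hfix (w k) h)
  rw [h2] at h
  omega

lemma fix_inv {c : ℕ} {w : Equiv.Perm (Fin n)} (hfix : ∀ i : Fin n, i.1 < c → w i = i) :
    ∀ i : Fin n, i.1 < c → w⁻¹ i = i := by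
  intro i hi
  calc w⁻¹ i = w⁻¹ (w i) := by rw [hfix i hi]
  _ = i := w.symm_apply_apply i

/-- In any "decreasing pair" occurrence, the earlier position is beyond the fixed prefix. -/
lemma occ_ge {c : ℕ} {w : Equiv.Perm (Fin n)} (hfix : ∀ i : Fin n, i.1 < c → w i = i)
    {i k : Fin n} (hik : i < k) (h : w k < w i) : c ≤ i.1 := by
  by_contra hlt
  push_neg at hlt
  have hwi : w i = i := hfix i hlt
  rw [Fin.lt_def] at hik h
  rw [hwi] at h
  rcases Nat.lt_or_ge k.1 c with hc | hc
  · rw [hfix k hc] at h; omega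
  · have := fix_ge hfix k hc; omega

lemma prod_fix (l : List {j : ℕ // j + 1 < n}) (c : ℕ) (h : ∀ j ∈ l, c < j.1) :
    ∀ i : Fin n, i.1 ≤ c → (l.map sRefl).prod i = i := by
  induction l with
  | nil => intro i _; simp
  | cons j t ih =>
    intro i hi
    have hj := h j List.mem_cons_self
    have ht : ∀ j ∈ t, c < j.1 := fun a ha => h a (List.mem_cons_of_mem _ ha)
    simp only [List.map_cons, List.prod_cons, Equiv.Perm.mul_apply, ih ht i hi]
    apply Fin.ext
    rw [sRefl_val]
    split_ifs <;> omega

lemma prod_inv (l : List {j : ℕ // j + 1 < n}) :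
    ((l.map sRefl).prod)⁻¹ = (l.reverse.map sRefl).prod := by
  induction l with
  | nil => simp
  | cons j t ih =>
    simp only [List.map_cons, List.prod_cons, mul_inv_rev, ih, sRefl_inv,
      List.reverse_cons, List.map_append, List.prod_append, List.map_cons,
      List.map_nil, List.prod_cons, List.prod_nil, mul_one]

lemma prod_commute (l : List {j : ℕ // j + 1 < n}) (c : {j : ℕ // j + 1 < n})
    (h : ∀ j ∈ l, c.1 + 2 ≤ j.1 ∨ j.1 + 2 ≤ c.1) :
    Commute (sRefl c) (l.map sRefl).prod := by
  apply Commute.list_prod_right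
  intro x hx
  rw [List.mem_map] at hx
  obtain ⟨j, hj, rfl⟩ := hx
  exact sRefl_commute (h j hj)


lemma avoids_mul_sRefl (t : {j : ℕ // j + 1 < n}) {u : Equiv.Perm (Fin n)}
    (hfix : ∀ i : Fin n, i.1 ≤ t.1 → u i = i) :
    (Avoids321 u ∧ Avoids3412 u) ↔
      (Avoids321 (sRefl t * u) ∧ Avoids3412 (sRefl t * u)) := by
  set c := t.1 with hc
  set v := sRefl t * u with hvdef
  have hfixu : ∀ i : Fin n, i.1 < c + 1 → u i = i := fun i hi => hfix i (by omega)
  have huge : ∀ k : Fin n, c + 1 ≤ k.1 → c + 1 ≤ (u k).1 := fix_ge hfixu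
  have hv : ∀ i : Fin n, (v i).1 =
      if (u i).1 = c then c + 1 else if (u i).1 = c + 1 then c else (u i).1 := by
    intro i
    rw [hvdef, Equiv.Perm.mul_apply, sRefl_val]
  have hfixv : ∀ i : Fin n, i.1 < c → v i = i := by
    intro i hi
    apply Fin.ext
    rw [hv i, hfixu i (by omega)]
    split_ifs <;> omega
  have hvge : ∀ k : Fin n, c ≤ k.1 → c ≤ (v k).1 := fix_ge hfixv
  have iso : ∀ i k : Fin n, c < i.1 → c < k.1 → ((u i).1 < (u k).1 ↔ (v i).1 < (v k).1) := by
    intro i k hi hk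
    have h1 := huge i (by omega)
    have h2 := huge k (by omega)
    rw [hv i, hv k]
    split_ifs <;> omega
  constructor
  · rintro ⟨h1, h2⟩
    constructor
    · rintro ⟨p, q, r, hpq, hqr, ha, hb⟩
      have hp : c ≤ p.1 := occ_ge hfixv (hpq.trans hqr) (ha.trans hb)
      simp only [Fin.lt_def] at hpq hqr ha hb
      rcases eq_or_lt_of_le hp with hp' | hp'
      · have h3 := hvge q (by omega)
        have h4 := hvge r (by omega)
        have h5 : (v p).1 = c + 1 := by
          rw [hv p, hfix p (by omega)]
          split_ifs <;> omega
        omega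
      · exact h1 ⟨p, q, r, by rw [Fin.lt_def]; exact hpq, by rw [Fin.lt_def]; exact hqr,
          by rw [Fin.lt_def]; exact (iso r q (by omega) (by omega)).mpr ha,
          by rw [Fin.lt_def]; exact (iso q p (by omega) (by omega)).mpr hb⟩
    · rintro ⟨p, q, r, s, hpq, hqr, hrs, ha, hb, hc3⟩
      have hp : c ≤ p.1 := occ_ge hfixv (hpq.trans hqr) (ha.trans hb)
      simp only [Fin.lt_def] at hpq hqr hrs ha hb hc3
      rcases eq_or_lt_of_le hp with hp' | hp'
      · have h3 := hvge r (by omega)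
        have h4 := hvge s (by omega)
        have h5 : (v p).1 = c + 1 := by
          rw [hv p, hfix p (by omega)]
          split_ifs <;> omega
        omega
      · exact h2 ⟨p, q, r, s, by rw [Fin.lt_def]; exact hpq, by rw [Fin.lt_def]; exact hqr,
          by rw [Fin.lt_def]; exact hrs,
          by rw [Fin.lt_def]; exact (iso r s (by omega) (by omega)).mpr ha,
          by rw [Fin.lt_def]; exact (iso s p (by omega) (by omega)).mpr hb,
          by rw [Fin.lt_def]; exact (iso p q (by omega) (by omega)).mpr hc3⟩
  · rintro ⟨h1, h2⟩
    constructor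
    · rintro ⟨p, q, r, hpq, hqr, ha, hb⟩
      have hp : c + 1 ≤ p.1 := occ_ge hfixu (hpq.trans hqr) (ha.trans hb)
      simp only [Fin.lt_def] at hpq hqr ha hb
      exact h1 ⟨p, q, r, by rw [Fin.lt_def]; exact hpq, by rw [Fin.lt_def]; exact hqr,
        by rw [Fin.lt_def]; exact (iso r q (by omega) (by omega)).mp ha,
        by rw [Fin.lt_def]; exact (iso q p (by omega) (by omega)).mp hb⟩
    · rintro ⟨p, q, r, s, hpq, hqr, hrs, ha, hb, hc3⟩
      have hp : c + 1 ≤ p.1 := occ_ge hfixu (hpq.trans hqr) (ha.trans hb)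
      simp only [Fin.lt_def] at hpq hqr hrs ha hb hc3
      exact h2 ⟨p, q, r, s, by rw [Fin.lt_def]; exact hpq, by rw [Fin.lt_def]; exact hqr,
        by rw [Fin.lt_def]; exact hrs,
        by rw [Fin.lt_def]; exact (iso r s (by omega) (by omega)).mp ha,
        by rw [Fin.lt_def]; exact (iso s p (by omega) (by omega)).mp hb,
        by rw [Fin.lt_def]; exact (iso p q (by omega) (by omega)).mp hc3⟩


lemma dir1 : ∀ (N : ℕ) (js : List {j : ℕ // j + 1 < n}), js.length ≤ N →
    (js.map Subtype.val).Nodup →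
    Avoids321 (js.map sRefl).prod ∧ Avoids3412 (js.map sRefl).prod := by
  intro N
  induction N with
  | zero =>
    intro js h _
    have : js = [] := List.eq_nil_of_length_eq_zero (Nat.le_zero.mp h)
    subst this
    simpa using ⟨avoids321_one, avoids3412_one⟩
  | succ N ih =>
    intro js hlen hnd
    rcases eq_or_ne js [] with rfl | hne
    · simpa using ⟨avoids321_one, avoids3412_one⟩
    · -- pick the element with minimal index
      have hargm : js.argmin Subtype.val ≠ none := by
        rw [Ne, List.argmin_eq_none]; exact hne
      obtain ⟨jm, hjm⟩ := Option.ne_none_iff_exists'.mp hargm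
      have hmem : jm ∈ js := List.argmin_mem hjm
      have hmin : ∀ a ∈ js, jm.1 ≤ a.1 := fun a ha => List.le_of_mem_argmin ha hjm
      obtain ⟨A, B, rfl⟩ := List.append_of_mem hmem
      rw [List.map_append, List.map_cons, List.nodup_append] at hnd
      obtain ⟨ndA, ndcons, disj⟩ := hnd
      rw [List.nodup_cons] at ndcons
      obtain ⟨hmB, ndB⟩ := ndcons
      have hmA : jm.1 ∉ A.map Subtype.val := fun h => disj jm.1 h jm.1 List.mem_cons_self rfl
      have hgtA : ∀ a ∈ A, jm.1 < a.1 := by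
        intro a ha
        have h1 := hmin a (List.mem_append_left _ ha)
        rcases eq_or_lt_of_le h1 with h2 | h2
        · exact absurd (List.mem_map_of_mem (f := Subtype.val) ha) (h2 ▸ hmA)
        · exact h2
      have hgtB : ∀ a ∈ B, jm.1 < a.1 := by
        intro a ha
        have h1 := hmin a (List.mem_append_right _ (List.mem_cons_of_mem _ ha))
        rcases eq_or_lt_of_le h1 with h2 | h2
        · exact absurd (List.mem_map_of_mem (f := Subtype.val) ha) (h2 ▸ hmB)
        · exact h2
      have hlenAB : (A ++ B).length ≤ N := by
        simp only [List.length_append, List.length_cons] at hlen ⊢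
        omega
      have ndAB : ((A ++ B).map Subtype.val).Nodup := by
        rw [List.map_append, List.nodup_append]
        exact ⟨ndA, ndB, fun a ha b hb => disj a ha b (List.mem_cons_of_mem _ hb)⟩
      have hfixAB : ∀ i : Fin n, i.1 ≤ jm.1 → ((A ++ B).map sRefl).prod i = i := by
        apply prod_fix
        intro a ha
        rcases List.mem_append.mp ha with h | h
        · exact hgtA a h
        · exact hgtB a h
      by_cases hA1 : (jm.1 + 1) ∈ A.map Subtype.val
      · -- s_m can be moved to the back
        have hgeB2 : ∀ b ∈ B, jm.1 + 2 ≤ b.1 := by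
          intro b hb
          have h1 := hgtB b hb
          have h2 : b.1 ≠ jm.1 + 1 := by
            intro he
            exact disj (jm.1 + 1) hA1 (jm.1 + 1) (List.mem_cons_of_mem _ (he ▸ List.mem_map_of_mem (f := Subtype.val) hb)) rfl
          omega
        have hcommB := prod_commute B jm (fun b hb => Or.inl (hgeB2 b hb))
        have hw : ((A ++ jm :: B).map sRefl).prod
            = ((A ++ B).map sRefl).prod * sRefl jm := by
          simp only [List.map_append, List.prod_append, List.map_cons, List.prod_cons]
          rw [hcommB.eq, ← mul_assoc]
        set u := ((A ++ B).map sRefl).prod with hu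
        have hrevlen : (A ++ B).reverse.length ≤ N := by
          rwa [List.length_reverse]
        have hrevnd : ((A ++ B).reverse.map Subtype.val).Nodup := by
          rw [List.map_reverse, List.nodup_reverse]
          exact ndAB
        have hav := ih _ hrevlen hrevnd
        rw [← prod_inv] at hav
        have hfixinv : ∀ i : Fin n, i.1 ≤ jm.1 → u⁻¹ i = i := by
          rw [prod_inv]
          apply prod_fix
          intro a ha
          rcases List.mem_append.mp (List.mem_reverse.mp ha) with h | h
          · exact hgtA a h
          · exact hgtB a h
        have hv := (avoids_mul_sRefl jm hfixinv).mp hav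
        have hinv : (u * sRefl jm)⁻¹ = sRefl jm * u⁻¹ := by
          rw [mul_inv_rev, sRefl_inv]
        rw [hw]
        constructor
        · have h5 : Avoids321 ((u * sRefl jm)⁻¹) := by rw [hinv]; exact hv.1
          have h6 := avoids321_inv h5
          rwa [inv_inv] at h6
        · have h5 : Avoids3412 ((u * sRefl jm)⁻¹) := by rw [hinv]; exact hv.2
          have h6 := avoids3412_inv h5
          rwa [inv_inv] at h6
      · -- s_m can be moved to the front
        have hgeA2 : ∀ a ∈ A, jm.1 + 2 ≤ a.1 := by
          intro a ha
          have h1 := hgtA a ha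
          have h2 : a.1 ≠ jm.1 + 1 := by
            intro he
            exact hA1 (he ▸ List.mem_map_of_mem (f := Subtype.val) ha)
          omega
        have hcommA := prod_commute A jm (fun a ha => Or.inl (hgeA2 a ha))
        have hw : ((A ++ jm :: B).map sRefl).prod
            = sRefl jm * ((A ++ B).map sRefl).prod := by
          simp only [List.map_append, List.prod_append, List.map_cons, List.prod_cons]
          rw [← mul_assoc, ← hcommA.eq, mul_assoc]
        have hav := ih _ hlenAB ndAB
        rw [hw]
        exact (avoids_mul_sRefl jm hfixAB).mp hav


lemma lemA {c : ℕ} {w : Equiv.Perm (Fin n)} (hc2 : c + 1 < n)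
    (hfix : ∀ i : Fin n, i.1 < c → w i = i)
    (h1 : Avoids321 w) (h2 : Avoids3412 w)
    (hne : (w ⟨c, Nat.lt_of_succ_lt hc2⟩).1 ≠ c) :
    (w ⟨c, Nat.lt_of_succ_lt hc2⟩).1 = c + 1 ∨ (w ⟨c + 1, hc2⟩).1 = c := by
  by_contra hcon
  push_neg at hcon
  obtain ⟨hv1, hv2⟩ := hcon
  set ca : Fin n := ⟨c, Nat.lt_of_succ_lt hc2⟩ with hca
  set cb : Fin n := ⟨c + 1, hc2⟩ with hcb
  have hcaval : ca.1 = c := rfl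
  have hcbval : cb.1 = c + 1 := rfl
  have hwge := fix_ge hfix
  have hinvfix := fix_inv hfix
  have hinvge := fix_ge hinvfix
  have hvca : c + 2 ≤ (w ca).1 := by
    have := hwge ca (le_of_eq hcaval.symm)
    omega
  set p := w⁻¹ ca with hp
  have hwp : w p = ca := w.apply_symm_apply ca
  have hpge : c + 2 ≤ p.1 := by
    have h3 := hinvge ca (le_of_eq hcaval.symm)
    have h4 : p.1 ≠ c := by
      intro he
      have he2 : p = ca := Fin.ext he
      rw [he2] at hwp
      exact hne (by rw [hwp])
    have h5 : p.1 ≠ c + 1 := by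
      intro he
      have he2 : p = cb := Fin.ext he
      rw [he2] at hwp
      exact hv2 (by rw [hwp])
    omega
  have hucb : c + 1 ≤ (w cb).1 := by
    have h3 := hwge cb (by omega)
    have h4 : (w cb).1 ≠ c := hv2
    omega
  have hulv : (w ca).1 < (w cb).1 := by
    by_contra hle
    push_neg at hle
    have hne2 : w cb ≠ w ca := by
      intro he
      have := w.injective he
      rw [Fin.ext_iff] at this
      omega
    have hne3 : (w cb).1 ≠ (w ca).1 := fun he => hne2 (Fin.ext he)
    refine h1 ⟨ca, cb, p, ?_, ?_, ?_, ?_⟩ <;> rw [Fin.lt_def]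
    · omega
    · omega
    · rw [hwp]; omega
    · omega
  set q := w⁻¹ cb with hq
  have hwq : w q = cb := w.apply_symm_apply cb
  have hqge : c + 2 ≤ q.1 := by
    have h3 := hinvge cb (by omega)
    have h4 : q.1 ≠ c := by
      intro he
      have he2 : q = ca := Fin.ext he
      rw [he2] at hwq
      have := congrArg Fin.val hwq
      omega
    have h5 : q.1 ≠ c + 1 := by
      intro he
      have he2 : q = cb := Fin.ext he
      rw [he2] at hwq
      have := congrArg Fin.val hwq
      omega
    omega
  have hqp : q.1 ≠ p.1 := by
    intro he
    have he2 : q = p := Fin.ext he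
    rw [he2, hwp] at hwq
    have := congrArg Fin.val hwq
    omega
  rcases Nat.lt_or_ge q.1 p.1 with hlt | hge2
  · refine h1 ⟨cb, q, p, ?_, ?_, ?_, ?_⟩ <;> rw [Fin.lt_def]
    · omega
    · omega
    · rw [hwp, hwq]; omega
    · rw [hwq]; omega
  · refine h2 ⟨ca, cb, p, q, ?_, ?_, ?_, ?_, ?_, ?_⟩ <;> rw [Fin.lt_def]
    · omega
    · omega
    · omega
    · rw [hwp, hwq]; omega
    · rw [hwq]; omega
    · omega

lemma caseOne {c : ℕ} (hc2 : c + 1 < n) {w : Equiv.Perm (Fin n)}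
    (hfix : ∀ i : Fin n, i.1 < c → w i = i)
    (h1 : Avoids321 w) (h2 : Avoids3412 w)
    (heq : w ⟨c, Nat.lt_of_succ_lt hc2⟩ = ⟨c + 1, hc2⟩)
    (IH : ∀ w' : Equiv.Perm (Fin n), (∀ i : Fin n, i.1 < c + 1 → w' i = i) →
      Avoids321 w' → Avoids3412 w' →
      ∃ js : List {j : ℕ // j + 1 < n}, (js.map Subtype.val).Nodup ∧
        (∀ j ∈ js, c + 1 ≤ j.1) ∧ w' = (js.map sRefl).prod) :
    ∃ js : List {j : ℕ // j + 1 < n}, (js.map Subtype.val).Nodup ∧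
      (∀ j ∈ js, c ≤ j.1) ∧ w = (js.map sRefl).prod := by
  set t : {j : ℕ // j + 1 < n} := ⟨c, hc2⟩ with ht
  set u := sRefl t * w with hu
  have hufix : ∀ i : Fin n, i.1 ≤ c → u i = i := by
    intro i hi
    rcases eq_or_lt_of_le hi with hieq | hilt
    · have hieq2 : i = ⟨c, Nat.lt_of_succ_lt hc2⟩ := Fin.ext hieq
      rw [hu, Equiv.Perm.mul_apply, hieq2, heq]
      apply Fin.ext
      rw [sRefl_val]
      simp only [ht]
      split_ifs <;> omega
    · rw [hu, Equiv.Perm.mul_apply, hfix i hilt]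
      apply Fin.ext
      rw [sRefl_val]
      simp only [ht]
      split_ifs <;> omega
  have hw : w = sRefl t * u := by
    rw [hu, ← mul_assoc, sRefl_mul_self, one_mul]
  have hav : Avoids321 u ∧ Avoids3412 u := by
    apply (avoids_mul_sRefl t hufix).mpr
    rw [← hw]
    exact ⟨h1, h2⟩
  obtain ⟨js, hnd, hge, hprod⟩ := IH u (fun i hi => hufix i (by omega)) hav.1 hav.2
  refine ⟨t :: js, ?_, ?_, ?_⟩
  · rw [List.map_cons, List.nodup_cons]
    refine ⟨?_, hnd⟩
    intro hmem
    obtain ⟨j, hj, hj2⟩ := List.mem_map.mp hmem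
    have := hge j hj
    simp only [ht] at hj2
    omega
  · intro j hj
    rcases List.mem_cons.mp hj with rfl | hj2
    · exact le_refl c
    · have := hge j hj2
      omega
  · rw [List.map_cons, List.prod_cons, ← hprod, hw]

lemma dir2 : ∀ (k c : ℕ) (w : Equiv.Perm (Fin n)), n ≤ c + k →
    (∀ i : Fin n, i.1 < c → w i = i) → Avoids321 w → Avoids3412 w →
    ∃ js : List {j : ℕ // j + 1 < n}, (js.map Subtype.val).Nodup ∧
      (∀ j ∈ js, c ≤ j.1) ∧ w = (js.map sRefl).prod := by
  intro k
  induction k with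
  | zero =>
    intro c w hck hfix _ _
    refine ⟨[], List.nodup_nil, by simp, ?_⟩
    simp only [List.map_nil, List.prod_nil]
    exact Equiv.ext fun i => (hfix i (by have := i.2; omega)).trans (Equiv.Perm.one_apply i).symm
  | succ k ih =>
    intro c w hck hfix h1 h2
    by_cases hcn : c < n
    · set ca : Fin n := ⟨c, hcn⟩ with hcadef
      have hcav : ca.1 = c := rfl
      by_cases hfc : w ca = ca
      · obtain ⟨js, hnd, hge, hp⟩ := ih (c + 1) w (by omega)
          (fun i hi => by
            rcases Nat.lt_or_ge i.1 c with h | h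
            · exact hfix i h
            · have : i = ca := Fin.ext (by omega)
              rw [this]; exact hfc) h1 h2
        exact ⟨js, hnd, fun j hj => by have := hge j hj; omega, hp⟩
      · have hnec : (w ca).1 ≠ c := by
          intro he
          exact hfc (Fin.ext he)
        have hwgeca := fix_ge hfix ca (le_refl c)
        have hc2 : c + 1 < n := by
          have := (w ca).2
          omega
        have IH' : ∀ w' : Equiv.Perm (Fin n), (∀ i : Fin n, i.1 < c + 1 → w' i = i) →
            Avoids321 w' → Avoids3412 w' →
            ∃ js : List {j : ℕ // j + 1 < n}, (js.map Subtype.val).Nodup ∧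
              (∀ j ∈ js, c + 1 ≤ j.1) ∧ w' = (js.map sRefl).prod :=
          fun w' hf ha hb => ih (c + 1) w' (by omega) hf ha hb
        rcases lemA hc2 hfix h1 h2 hnec with hA | hB
        · exact caseOne hc2 hfix h1 h2 (Fin.ext hA) IH'
        · have hfixinv := fix_inv hfix
          have h1' := avoids321_inv h1
          have h2' := avoids3412_inv h2
          have heq : w⁻¹ ⟨c, Nat.lt_of_succ_lt hc2⟩ = ⟨c + 1, hc2⟩ := by
            have he : w ⟨c + 1, hc2⟩ = ⟨c, Nat.lt_of_succ_lt hc2⟩ := Fin.ext hB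
            rw [← he]; exact w.symm_apply_apply _
          obtain ⟨js, hnd, hge, hp⟩ := caseOne hc2 hfixinv h1' h2' heq IH'
          refine ⟨js.reverse, ?_, ?_, ?_⟩
          · rw [List.map_reverse, List.nodup_reverse]; exact hnd
          · intro j hj; exact hge j (List.mem_reverse.mp hj)
          · rw [← prod_inv, ← hp, inv_inv]
    · refine ⟨[], List.nodup_nil, by simp, ?_⟩
      simp only [List.map_nil, List.prod_nil]
      exact Equiv.ext fun i => (hfix i (by have := i.2; omega)).trans (Equiv.Perm.one_apply i).symm

end Scratch


/-- `w` is a product of distinct simple reflections iff it avoids `(321)` and `(3412)`. -/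
theorem stmt14 (n : ℕ) (w : Equiv.Perm (Fin n)) :
    BooleanPerm w ↔ Avoids321 w ∧ Avoids3412 w := by
  constructor
  · rintro ⟨js, hnd, rfl⟩
    exact Scratch.dir1 js.length js le_rfl hnd
  · rintro ⟨h1, h2⟩
    obtain ⟨js, hnd, _, hp⟩ := Scratch.dir2 n 0 w (by omega)
      (fun i hi => absurd hi (Nat.not_lt_zero _)) h1 h2
    exact ⟨js, hnd, hp⟩
end

section
/- The number of Boolean permutations in S_n (permutations expressible as products of distinct simple reflections) equals the Fibonacci number F_{2n-1}, where F_1 = F_2 = 1. -/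
namespace B15

def sg (n a : ℕ) : Equiv.Perm (Fin n) :=
  if h : a + 1 < n then Equiv.swap ⟨a, by omega⟩ ⟨a + 1, h⟩ else 1

lemma swap_mul_comm {α : Type*} [DecidableEq α] {a b c d : α}
    (h1 : a ≠ c) (h2 : a ≠ d) (h3 : b ≠ c) (h4 : b ≠ d) :
    Equiv.swap a b * Equiv.swap c d = Equiv.swap c d * Equiv.swap a b := by
  ext x
  simp only [Equiv.Perm.mul_apply]
  rcases eq_or_ne x c with rfl | hxc
  · rw [Equiv.swap_apply_left, Equiv.swap_apply_of_ne_of_ne h2.symm h4.symm,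
      Equiv.swap_apply_of_ne_of_ne h1.symm h3.symm, Equiv.swap_apply_left]
  · rcases eq_or_ne x d with rfl | hxd
    · rw [Equiv.swap_apply_right, Equiv.swap_apply_of_ne_of_ne h1.symm h3.symm,
        Equiv.swap_apply_of_ne_of_ne h2.symm h4.symm, Equiv.swap_apply_right]
    · rw [Equiv.swap_apply_of_ne_of_ne hxc hxd]
      rcases eq_or_ne x a with rfl | hxa
      · rw [Equiv.swap_apply_left, Equiv.swap_apply_of_ne_of_ne h3 h4]
      · rcases eq_or_ne x b with rfl | hxb
        · rw [Equiv.swap_apply_right, Equiv.swap_apply_of_ne_of_ne h1 h2]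
        · rw [Equiv.swap_apply_of_ne_of_ne hxa hxb, Equiv.swap_apply_of_ne_of_ne hxc hxd]

lemma sg_comm {n i j : ℕ} (h : i + 2 ≤ j) : sg n i * sg n j = sg n j * sg n i := by
  unfold sg
  split_ifs with h1 h2 h2
  · exact swap_mul_comm ((by simp only [ne_eq, Fin.mk.injEq]; omega)) ((by simp only [ne_eq, Fin.mk.injEq]; omega))
      ((by simp only [ne_eq, Fin.mk.injEq]; omega)) ((by simp only [ne_eq, Fin.mk.injEq]; omega))
  · simp
  · simp
  · simp

lemma sg_apply_of_gt {n a : ℕ} (x : Fin n) (h : a + 1 < x.1) : sg n a x = x := by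
  unfold sg
  split_ifs with h1
  · exact Equiv.swap_apply_of_ne_of_ne (by simp only [ne_eq, Fin.ext_iff]; omega)
      (by simp only [ne_eq, Fin.ext_iff]; omega)
  · rfl

lemma sg_apply_top {n a : ℕ} (h : a + 1 < n) : sg n a ⟨a + 1, h⟩ = ⟨a, by omega⟩ := by
  unfold sg
  rw [dif_pos h]
  exact Equiv.swap_apply_right _ _

lemma sg_eq {n a : ℕ} (h : a + 1 < n) : sg n a = sRefl ⟨a, h⟩ := by
  unfold sg sRefl
  rw [dif_pos h]

def phi (n : ℕ) : ℕ → List (Option Bool) → Equiv.Perm (Fin n)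
  | _, [] => 1
  | a, (none :: t) => phi n (a - 1) t
  | a, (some true :: t) => sg n a * phi n (a - 1) t
  | a, (some false :: t) => phi n (a - 1) t * sg n a

@[simp] lemma phi_nil {n a : ℕ} : phi n a [] = 1 := rfl
@[simp] lemma phi_none {n a : ℕ} {t : List (Option Bool)} :
    phi n a (none :: t) = phi n (a - 1) t := rfl
@[simp] lemma phi_true {n a : ℕ} {t : List (Option Bool)} :
    phi n a (some true :: t) = sg n a * phi n (a - 1) t := rfl
@[simp] lemma phi_false {n a : ℕ} {t : List (Option Bool)} :
    phi n a (some false :: t) = phi n (a - 1) t * sg n a := rfl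

lemma phi_fix {n : ℕ} (L : List (Option Bool)) : ∀ (a : ℕ) (x : Fin n),
    L.length ≤ a + 1 → a + 1 < x.1 → phi n a L x = x := by
  induction L with
  | nil => intro a x _ _; rfl
  | cons h t IH =>
    intro a x hlen hx
    simp only [List.length_cons] at hlen
    match h with
    | none =>
      rw [phi_none]
      exact IH (a-1) x (by omega) (by omega)
    | some true =>
      rw [phi_true, Equiv.Perm.mul_apply, IH (a-1) x (by omega) (by omega),
        sg_apply_of_gt x (by omega)]
    | some false =>
      rw [phi_false, Equiv.Perm.mul_apply, sg_apply_of_gt x (by omega),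
        IH (a-1) x (by omega) (by omega)]
def headSome : List (Option Bool) → Bool
  | (some _) :: _ => true
  | _ => false

def validB : List (Option Bool) → Bool
  | [] => true
  | x :: t => ((x != some false) || headSome t) && validB t

@[simp] lemma headSome_nil : headSome [] = false := rfl
@[simp] lemma headSome_none (t : List (Option Bool)) : headSome (none :: t) = false := rfl
@[simp] lemma headSome_some (b : Bool) (t : List (Option Bool)) :
    headSome (some b :: t) = true := rfl
@[simp] lemma validB_nil : validB [] = true := rfl
@[simp] lemma validB_cons (x : Option Bool) (t : List (Option Bool)) :
    validB (x :: t) = (((x != some false) || headSome t) && validB t) := rfl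

lemma validB_tail {x : Option Bool} {t : List (Option Bool)}
    (h : validB (x :: t) = true) : validB t = true := by
  simp only [validB_cons, Bool.and_eq_true] at h
  exact h.2

lemma phi_inv_val {n : ℕ} (L : List (Option Bool)) : ∀ (a : ℕ) (h : a + 1 < n),
    validB L = true → L.length ≤ a + 1 →
    ((L.head? = none ∨ L.head? = some none) → phi n a L ⟨a+1, h⟩ = ⟨a+1, h⟩) ∧
    (L.head? = some (some true) → (phi n a L ⟨a+1, h⟩).1 = a) ∧
    (L.head? = some (some false) → (phi n a L ⟨a+1, h⟩).1 < a) := by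
  induction L with
  | nil =>
    intro a h _ _
    refine ⟨fun _ => rfl, fun hc => by simp at hc, fun hc => by simp at hc⟩
  | cons x t IH =>
    intro a h hv hl
    simp only [List.length_cons] at hl
    have htfix : phi n (a-1) t ⟨a+1, h⟩ = ⟨a+1, h⟩ := by
      rcases Nat.eq_zero_or_pos a with rfl | ha
      · have : t = [] := List.length_eq_zero_iff.mp (by omega)
        subst this; rfl
      · exact phi_fix t (a-1) _ (by omega) (by show a - 1 + 1 < a + 1; omega)
    refine ⟨?_, ?_, ?_⟩
    · intro hh
      rcases hh with hh | hh
      · simp at hh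
      · simp only [List.head?_cons, Option.some.injEq] at hh
        subst hh
        rw [phi_none]; exact htfix
    · intro hh
      simp only [List.head?_cons, Option.some.injEq] at hh
      subst hh
      rw [phi_true, Equiv.Perm.mul_apply, htfix, sg_apply_top h]
    · intro hh
      simp only [List.head?_cons, Option.some.injEq] at hh
      subst hh
      -- head t is some b
      have hhs : headSome t = true := by
        simp only [validB_cons, Bool.and_eq_true, Bool.or_eq_true] at hv
        rcases hv.1 with h' | h'
        · simp at h'
        · exact h'
      cases t with
      | nil => simp at hhs
      | cons y t' =>
      cases y with
      | none => simp at hhs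
      | some b =>
        simp only [List.length_cons] at hl
        have ha : 1 ≤ a := by omega
        have h' : (a - 1) + 1 < n := by omega
        have hpt := IH (a-1) h' (validB_tail hv) (by simp only [List.length_cons]; omega)
        have hfin : (⟨a, by omega⟩ : Fin n) = ⟨(a-1)+1, h'⟩ := by
          simp only [Fin.mk.injEq]; omega
        rw [phi_false, Equiv.Perm.mul_apply, sg_apply_top h, hfin]
        cases b
        · have := hpt.2.2 (by rfl)
          omega
        · have := hpt.2.1 (by rfl)
          omega

lemma phi_inj {n : ℕ} (L : List (Option Bool)) : ∀ (L' : List (Option Bool)) (a : ℕ),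
    a + 1 < n → validB L = true → validB L' = true → L.length ≤ a + 1 → L'.length ≤ a + 1 →
    L.length = L'.length → phi n a L = phi n a L' → L = L' := by
  induction L with
  | nil =>
    intro L' a _ _ _ _ _ hlen _
    cases L' with
    | nil => rfl
    | cons y t => simp at hlen
  | cons x t IH =>
    intro L' a hn hv hv' hl hl' hlen heq
    cases L' with
    | nil => simp at hlen
    | cons x' t' =>
      have h1 := phi_inv_val (n := n) (x :: t) a hn hv hl
      have h2 := phi_inv_val (n := n) (x' :: t') a hn hv' hl'
      have happ : phi n a (x :: t) ⟨a+1, hn⟩ = phi n a (x' :: t') ⟨a+1, hn⟩ := by rw [heq]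
      have hx : x = x' := by
        have hvv : (phi n a (x :: t) ⟨a+1, hn⟩).1 = (phi n a (x' :: t') ⟨a+1, hn⟩).1 := by
          rw [happ]
        match x, x' with
        | none, none => rfl
        | some true, some true => rfl
        | some false, some false => rfl
        | none, some true =>
          have e1 : (phi n a (none :: t) ⟨a+1, hn⟩).1 = a + 1 := by rw [h1.1 (Or.inr rfl)]
          have e2 := h2.2.1 rfl
          omega
        | none, some false =>
          have e1 : (phi n a (none :: t) ⟨a+1, hn⟩).1 = a + 1 := by rw [h1.1 (Or.inr rfl)]
          have e2 := h2.2.2 rfl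
          omega
        | some true, none =>
          have e1 : (phi n a (none :: t') ⟨a+1, hn⟩).1 = a + 1 := by rw [h2.1 (Or.inr rfl)]
          have e2 := h1.2.1 rfl
          omega
        | some false, none =>
          have e1 : (phi n a (none :: t') ⟨a+1, hn⟩).1 = a + 1 := by rw [h2.1 (Or.inr rfl)]
          have e2 := h1.2.2 rfl
          omega
        | some true, some false =>
          have e1 := h1.2.1 rfl
          have e2 := h2.2.2 rfl
          omega
        | some false, some true =>
          have e1 := h1.2.2 rfl
          have e2 := h2.2.1 rfl
          omega
      subst hx
      have hrec : phi n (a-1) t = phi n (a-1) t' := by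
        match x with
        | none => rw [phi_none, phi_none] at heq; exact heq
        | some true =>
          rw [phi_true, phi_true] at heq
          exact mul_left_cancel heq
        | some false =>
          rw [phi_false, phi_false] at heq
          exact mul_right_cancel heq
      have := IH t' (a-1) (by omega) (validB_tail hv) (validB_tail hv')
        (by simp at hl ⊢; omega) (by simp at hl' ⊢; omega) (by simp at hlen; omega) hrec
      rw [this]
lemma phi_boolean {n : ℕ} (L : List (Option Bool)) : ∀ (a : ℕ), a + 1 < n → L.length ≤ a + 1 →
    ∃ js : List {j : ℕ // j + 1 < n}, (js.map Subtype.val).Nodup ∧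
      (∀ j ∈ js, j.1 ≤ a ∧ a < j.1 + L.length) ∧ (js.map sRefl).prod = phi n a L := by
  induction L with
  | nil => intro a _ _; exact ⟨[], by simp, by simp, by simp⟩
  | cons x t IH =>
    intro a hn hl
    simp only [List.length_cons] at hl
    obtain ⟨js', hnd', hbd', hpr'⟩ := IH (a-1) (by omega) (by omega)
    match x with
    | none =>
      refine ⟨js', hnd', ?_, by rw [hpr', phi_none]⟩
      intro j hj
      have := hbd' j hj
      simp only [List.length_cons]
      omega
    | some true =>
      refine ⟨⟨a, hn⟩ :: js', ?_, ?_, ?_⟩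
      · simp only [List.map_cons, List.nodup_cons]
        refine ⟨?_, hnd'⟩
        intro hmem
        simp only [List.mem_map] at hmem
        obtain ⟨j, hj, hje⟩ := hmem
        have := hbd' j hj
        omega
      · intro j hj
        simp only [List.mem_cons] at hj
        simp only [List.length_cons]
        rcases hj with rfl | hj
        · simp
        · have := hbd' j hj; omega
      · rw [List.map_cons, List.prod_cons, hpr', phi_true, sg_eq hn]
    | some false =>
      refine ⟨js' ++ [⟨a, hn⟩], ?_, ?_, ?_⟩
      · simp only [List.map_append, List.nodup_append, List.map_cons, List.map_nil]
        refine ⟨hnd', List.nodup_singleton _, ?_⟩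
        intro v hv _ hv2 rfl
        simp only [List.mem_map] at hv
        obtain ⟨j, hj, hje⟩ := hv
        simp only [List.mem_singleton] at hv2
        have := hbd' j hj
        omega
      · intro j hj
        simp only [List.mem_append, List.mem_singleton] at hj
        simp only [List.length_cons]
        rcases hj with hj | rfl
        · have := hbd' j hj; omega
        · simp
      · rw [List.map_append, List.prod_append, hpr', phi_false, sg_eq hn]
        simp

lemma sg_phi_comm {n : ℕ} (t : List (Option Bool)) : ∀ (b j : ℕ),
    t.length ≤ b + 1 → b + 2 ≤ j → sg n j * phi n b t = phi n b t * sg n j := by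
  induction t with
  | nil => intro b j _ _; simp
  | cons x s IH =>
    intro b j hl hb
    simp only [List.length_cons] at hl
    match x with
    | none =>
      rw [phi_none]
      exact IH (b-1) j (by omega) (by omega)
    | some true =>
      rw [phi_true, ← mul_assoc, ← sg_comm (by omega : b + 2 ≤ j), mul_assoc,
        IH (b-1) j (by omega) (by omega), ← mul_assoc]
    | some false =>
      rw [phi_false, ← mul_assoc, IH (b-1) j (by omega) (by omega), mul_assoc, mul_assoc,
        sg_comm (by omega : b + 2 ≤ j)]
def ins : List (Option Bool) → ℕ → List (Option Bool)
  | [], _ => []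
  | _ :: t, 0 => some true :: t
  | none :: t, (p+1) => none :: ins t p
  | some b :: t, (p+1) => (if p = 0 then some false else some b) :: ins t p

@[simp] lemma ins_zero (x : Option Bool) (t : List (Option Bool)) :
    ins (x :: t) 0 = some true :: t := by cases x <;> rfl
@[simp] lemma ins_none_succ (t : List (Option Bool)) (p : ℕ) :
    ins (none :: t) (p+1) = none :: ins t p := rfl
@[simp] lemma ins_some_succ (b : Bool) (t : List (Option Bool)) (p : ℕ) :
    ins (some b :: t) (p+1) = (if p = 0 then some false else some b) :: ins t p := rfl

lemma ins_length (L : List (Option Bool)) : ∀ p, (ins L p).length = L.length := by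
  induction L with
  | nil => intro p; rfl
  | cons x t IH =>
    intro p
    cases p with
    | zero => simp
    | succ q => cases x <;> simp [IH]

lemma headSome_ins {t : List (Option Bool)} {p : ℕ} (hp : 1 ≤ p)
    (h : headSome t = true) : headSome (ins t p) = true := by
  cases t with
  | nil => simp at h
  | cons y t' =>
    cases y with
    | none => simp at h
    | some c =>
      obtain ⟨q, rfl⟩ : ∃ q, p = q + 1 := ⟨p - 1, by omega⟩
      rw [ins_some_succ]
      split <;> rfl

lemma ins_valid (L : List (Option Bool)) : ∀ p, validB L = true → L[p]? = some none →
    validB (ins L p) = true := by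
  induction L with
  | nil => intro p _ h; simp at h
  | cons x t IH =>
    intro p hv hg
    cases p with
    | zero =>
      simp only [List.getElem?_cons_zero, Option.some.injEq] at hg
      subst hg
      simpa using validB_tail hv
    | succ q =>
      simp only [List.getElem?_cons_succ] at hg
      have hvt := IH q (validB_tail hv) hg
      cases x with
      | none => simpa using hvt
      | some b =>
        rw [ins_some_succ]
        by_cases hq : q = 0
        · subst hq
          cases t with
          | nil => simp at hg
          | cons y t' =>
            simp only [List.getElem?_cons_zero, Option.some.injEq] at hg
            subst hg
            simp only [if_pos rfl, validB_cons, Bool.and_eq_true]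
            refine ⟨?_, hvt⟩
            simp
        · rw [if_neg hq]
          simp only [validB_cons, Bool.and_eq_true]
          refine ⟨?_, hvt⟩
          cases b
          · -- x = some false : old validity gives headSome t
            have : headSome t = true := by
              simp only [validB_cons, Bool.and_eq_true, Bool.or_eq_true] at hv
              rcases hv.1 with h' | h'
              · simp at h'
              · exact h'
            rw [headSome_ins (by omega) this]
            simp
          · simp

lemma ins_get (L : List (Option Bool)) : ∀ p q, p < L.length →
    ((∃ b, (ins L p)[q]? = some (some b)) ↔ (∃ b, L[q]? = some (some b)) ∨ q = p) := by
  induction L with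
  | nil => intro p q hp; simp at hp
  | cons x t IH =>
    intro p q hp
    cases p with
    | zero =>
      rw [ins_zero]
      cases q with
      | zero => simp
      | succ r => simp
    | succ p' =>
      simp only [List.length_cons] at hp
      cases q with
      | zero =>
        cases x with
        | none => simp
        | some b =>
          rw [ins_some_succ]
          by_cases hq : p' = 0 <;> simp [hq]
      | succ r =>
        have hIH := IH p' r (by omega)
        cases x with
        | none =>
          rw [ins_none_succ]
          simpa using hIH
        | some b =>
          rw [ins_some_succ]
          simp only [List.getElem?_cons_succ, Nat.succ.injEq]
          simpa using hIH

lemma ins_phi {n : ℕ} (L : List (Option Bool)) : ∀ (a p j : ℕ),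
    p < L.length → L.length ≤ a + 1 → a + 1 < n → a = j + p → L[p]? = some none →
    sg n j * phi n a L = phi n a (ins L p) := by
  induction L with
  | nil => intro a p j hp _ _ _ _; simp at hp
  | cons x t IH =>
    intro a p j hp hl hn ha hget
    simp only [List.length_cons] at hp hl
    cases p with
    | zero =>
      simp only [List.getElem?_cons_zero, Option.some.injEq] at hget
      subst hget
      obtain rfl : a = j := by omega
      rw [ins_zero, phi_none, phi_true]
    | succ q =>
      simp only [List.getElem?_cons_succ] at hget
      have hq : q < t.length := by
        have := List.getElem?_eq_some_iff.mp hget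
        omega
      cases x with
      | none =>
        rw [phi_none, ins_none_succ, phi_none]
        exact IH (a-1) q j (by omega) (by omega) (by omega) (by omega) hget
      | some b =>
        cases q with
        | zero =>
          cases t with
          | nil => simp at hq
          | cons y t' =>
            simp only [List.getElem?_cons_zero, Option.some.injEq] at hget
            subst hget
            obtain rfl : a = j + 1 := ha
            cases b
            · -- some false at head
              rw [phi_false, ins_some_succ, if_pos rfl, ins_zero, phi_false, phi_true, phi_none]
              have : j + 1 - 1 = j := by omega
              rw [this, ← mul_assoc]
            · -- some true at head
              rw [phi_true, ins_some_succ, if_pos rfl, ins_zero, phi_false, phi_true, phi_none]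
              have e1 : j + 1 - 1 = j := by omega
              rw [e1]
              cases t' with
              | nil => simp [mul_assoc]
              | cons z t'' =>
                -- commute sg (j+1) past phi (j-1) (z :: t'')
                have hlen : (z :: t'').length ≤ (j - 1) + 1 := by
                  simp only [List.length_cons] at hl ⊢
                  omega
                have hj1 : 1 ≤ j := by
                  simp only [List.length_cons] at hl
                  omega
                have hc := sg_phi_comm (n := n) (z :: t'') (j - 1) (j + 1)
                  hlen (by omega)
                rw [hc]
                exact (mul_assoc _ _ _).symm
        | succ r =>
          have harge : j + 2 ≤ a := by omega
          cases b
          · rw [phi_false, ins_some_succ, if_neg (by omega), phi_false, ← mul_assoc,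
              IH (a-1) (r+1) j (by omega) (by omega) (by omega) (by omega) hget]
          · rw [phi_true, ins_some_succ, if_neg (by omega), phi_true, ← mul_assoc,
              sg_comm (by omega : j + 2 ≤ a), mul_assoc,
              IH (a-1) (r+1) j (by omega) (by omega) (by omega) (by omega) hget]
lemma phi_replicate {n : ℕ} : ∀ (k a : ℕ), phi n a (List.replicate k none) = 1 := by
  intro k
  induction k with
  | zero => intro a; rfl
  | succ m IH => intro a; rw [List.replicate_succ, phi_none]; exact IH (a-1)

lemma validB_replicate : ∀ k, validB (List.replicate k none) = true := by
  intro k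
  induction k with
  | zero => rfl
  | succ m IH => rw [List.replicate_succ]; simpa using IH

lemma boolean_surj {n : ℕ} (hn : 2 ≤ n) (js : List {j : ℕ // j + 1 < n}) :
    (js.map Subtype.val).Nodup →
    ∃ L : List (Option Bool), validB L = true ∧ L.length = n - 1 ∧
      (∀ p b, L[p]? = some (some b) → (n - 2) - p ∈ js.map Subtype.val) ∧
      phi n (n-2) L = (js.map sRefl).prod := by
  induction js with
  | nil =>
    intro _
    refine ⟨List.replicate (n-1) none, validB_replicate _, by simp, ?_, by
      simp [phi_replicate]⟩
    intro p b h
    rw [List.getElem?_replicate] at h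
    split at h
    · simp at h
    · simp at h
  | cons j js' IH =>
    intro hnd
    simp only [List.map_cons, List.nodup_cons] at hnd
    obtain ⟨L', hv', hlen', hsupp', hphi'⟩ := IH hnd.2
    have hj2 : j.1 ≤ n - 2 := by have := j.2; omega
    set p₀ := (n - 2) - j.1 with hp₀
    have hp₀lt : p₀ < L'.length := by omega
    have hz : L'[p₀]? = some none := by
      have h1 : L'[p₀]? = some (L'[p₀]'(by omega)) := List.getElem?_eq_getElem (by omega)
      rcases he : L'[p₀]'(by omega) with _ | b
      · rw [h1, he]
      · exfalso
        have : (n - 2) - p₀ ∈ js'.map Subtype.val := hsupp' p₀ b (by rw [h1, he])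
        have h2 : (n-2) - p₀ = j.1 := by omega
        rw [h2] at this
        exact hnd.1 this
    refine ⟨ins L' p₀, ins_valid L' p₀ hv' hz, by rw [ins_length]; exact hlen', ?_, ?_⟩
    · intro p b h
      have := (ins_get L' p₀ p hp₀lt).mp ⟨b, h⟩
      rcases this with ⟨c, hc⟩ | rfl
      · exact List.mem_cons_of_mem _ (hsupp' p c hc)
      · have : (n-2) - p₀ = j.1 := by omega
        rw [this]
        exact List.mem_cons_self
    · rw [← ins_phi L' (n-2) p₀ j.1 hp₀lt (by omega) (by omega) (by omega) hz,
        List.map_cons, List.prod_cons, hphi', sg_eq j.2]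

lemma card_boolean_eq {n : ℕ} (hn : 2 ≤ n) :
    Nat.card {w : Equiv.Perm (Fin n) // BooleanPerm w} =
      Nat.card {L : List (Option Bool) // validB L = true ∧ L.length = n - 1} := by
  symm
  apply Nat.card_congr
  have hn2 : (n - 2) + 1 < n := by omega
  refine Equiv.ofBijective
    (fun L => ⟨phi n (n-2) L.1, ?_⟩) ⟨?_, ?_⟩
  · obtain ⟨js, hnd, _, hpr⟩ := phi_boolean L.1 (n-2) hn2 (by have := L.2.2; omega)
    exact ⟨js, hnd, hpr.symm⟩
  · rintro ⟨L, hL⟩ ⟨L', hL'⟩ h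
    simp only [Subtype.mk.injEq] at h ⊢
    exact phi_inj L L' (n-2) hn2 hL.1 hL'.1 (by omega) (by omega) (by omega) h
  · rintro ⟨w, js, hnd, rfl⟩
    obtain ⟨L, hv, hlen, _, hphi⟩ := boolean_surj hn js hnd
    exact ⟨⟨L, hv, hlen⟩, Subtype.ext hphi⟩
def enum : ℕ → List (List (Option Bool))
  | 0 => [[]]
  | m+1 => ((enum m).map (fun t => none :: t)) ++ ((enum m).map (fun t => some true :: t))
      ++ (((enum m).filter headSome).map (fun t => some false :: t))

lemma filter_headSome_map_none (l : List (List (Option Bool))) :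
    (l.map (fun t => none :: t)).filter headSome = [] := by
  induction l with
  | nil => rfl
  | cons x l IH => simpa using IH

lemma filter_headSome_map_some (b : Bool) (l : List (List (Option Bool))) :
    (l.map (fun t => some b :: t)).filter headSome = l.map (fun t => some b :: t) := by
  induction l with
  | nil => rfl
  | cons x l IH => simpa using IH

lemma mem_enum : ∀ (m : ℕ) (L : List (Option Bool)),
    L ∈ enum m ↔ (validB L = true ∧ L.length = m) := by
  intro m
  induction m with
  | zero =>
    intro L
    constructor
    · intro h; simp only [enum, List.mem_singleton] at h; subst h; simp
    · intro ⟨_, h⟩; simp only [enum, List.mem_singleton]; exact List.length_eq_zero_iff.mp h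
  | succ k IH =>
    intro L
    cases L with
    | nil =>
      simp only [enum, List.mem_append, List.mem_map, List.mem_filter]
      constructor
      · rintro ((⟨t, _, h⟩ | ⟨t, _, h⟩) | ⟨t, _, h⟩) <;> exact absurd h (by simp)
      · rintro ⟨_, h⟩; simp at h
    | cons x t =>
      simp only [enum, List.mem_append, List.mem_map, List.mem_filter, List.length_cons,
        validB_cons, Bool.and_eq_true, Bool.or_eq_true]
      constructor
      · rintro ((⟨s, hs, he⟩ | ⟨s, hs, he⟩) | ⟨s, hs, he⟩)
        · injection he with he1 he2
          subst he1; subst he2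
          have := (IH s).mp hs
          exact ⟨⟨by simp, this.1⟩, by omega⟩
        · injection he with he1 he2
          subst he1; subst he2
          have := (IH s).mp hs
          exact ⟨⟨by simp, this.1⟩, by omega⟩
        · injection he with he1 he2
          subst he1; subst he2
          have := (IH s).mp hs.1
          exact ⟨⟨Or.inr hs.2, this.1⟩, by omega⟩
      · rintro ⟨⟨hx, hv⟩, hlen⟩
        have ht : t ∈ enum k := (IH t).mpr ⟨hv, by omega⟩
        match x, hx with
        | none, _ => exact Or.inl (Or.inl ⟨t, ht, rfl⟩)
        | some true, _ => exact Or.inl (Or.inr ⟨t, ht, rfl⟩)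
        | some false, Or.inr hh => exact Or.inr ⟨t, ⟨ht, hh⟩, rfl⟩

lemma enum_nodup : ∀ m, (enum m).Nodup := by
  intro m
  induction m with
  | zero => simp [enum]
  | succ k IH =>
    rw [enum, List.nodup_append, List.nodup_append]
    refine ⟨⟨IH.map List.cons_injective, IH.map List.cons_injective, ?_⟩,
      (IH.filter _).map List.cons_injective, ?_⟩
    · intro L hL L' hL' rfl
      simp only [List.mem_map] at hL hL'
      obtain ⟨s, _, rfl⟩ := hL
      obtain ⟨s', _, he⟩ := hL'
      exact absurd ((List.cons.injEq _ _ _ _ ▸ he).1) (by simp)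
    · intro L hL L' hL' rfl
      simp only [List.mem_append, List.mem_map] at hL hL'
      obtain ⟨s', _, he⟩ := hL'
      rcases hL with ⟨s, _, rfl⟩ | ⟨s, _, rfl⟩ <;>
        exact absurd ((List.cons.injEq _ _ _ _ ▸ he).1) (by simp)

lemma enum_length : ∀ m, (enum m).length = Nat.fib (2*m+1) ∧
    ((enum m).filter headSome).length = Nat.fib (2*m) := by
  intro m
  induction m with
  | zero => constructor <;> rfl
  | succ k IH =>
    obtain ⟨h1, h2⟩ := IH
    have hf : (enum (k+1)).filter headSome =
        ((enum k).map (fun t => some true :: t)) ++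
          (((enum k).filter headSome).map (fun t => some false :: t)) := by
      rw [enum, List.filter_append, List.filter_append, filter_headSome_map_none,
        filter_headSome_map_some, filter_headSome_map_some]
      simp
    constructor
    · rw [enum]
      simp only [List.length_append, List.length_map]
      have e1 : Nat.fib (2*k+1+1) = Nat.fib (2*k) + Nat.fib (2*k+1) := Nat.fib_add_two
      have e2 : Nat.fib (2*k+1+2) = Nat.fib (2*k+1) + Nat.fib (2*k+1+1) := Nat.fib_add_two
      have : 2*(k+1)+1 = 2*k+1+2 := by ring
      rw [this]
      omega
    · rw [hf]
      simp only [List.length_append, List.length_map]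
      have e1 : Nat.fib (2*k+2) = Nat.fib (2*k) + Nat.fib (2*k+1) := Nat.fib_add_two
      have : 2*(k+1) = 2*k+2 := by ring
      rw [this]
      omega

lemma card_valid (m : ℕ) :
    Nat.card {L : List (Option Bool) // validB L = true ∧ L.length = m} = Nat.fib (2*m+1) := by
  have e1 : {L : List (Option Bool) // validB L = true ∧ L.length = m} ≃
      {L // L ∈ enum m} := Equiv.subtypeEquivRight (fun L => (mem_enum m L).symm)
  rw [Nat.card_congr e1, Nat.card_congr ((enum_nodup m).getEquiv (enum m)).symm]
  simp [(enum_length m).1]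
end B15

/-- The number of Boolean permutations in `S_n` is the Fibonacci number `F_{2n-1}`. -/
theorem stmt15 (n : ℕ) (hn : 1 ≤ n) :
    Nat.card {w : Equiv.Perm (Fin n) // BooleanPerm w} = Nat.fib (2 * n - 1) := by
  rcases eq_or_lt_of_le hn with h1 | h2
  · subst h1
    have hall : ∀ w : Equiv.Perm (Fin 1), w = 1 := fun w => Equiv.ext fun x =>
      Subsingleton.elim _ _
    haveI : Unique {w : Equiv.Perm (Fin 1) // BooleanPerm w} :=
      { default := ⟨1, ⟨[], by simp, by simp⟩⟩
        uniq := fun a => Subtype.ext (hall a.1) }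
    rw [Nat.card_unique]
    rfl
  · rw [B15.card_boolean_eq h2, B15.card_valid]
    congr 1
    omega
end
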